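/- Let φ be a strictly convex N-function, w a weight on I, and f = Σ_{i=1}^n a_i·χ_{A_i} with a_1 > a_2 > … > a_n > 0, A_i = [t_{i−1}, t_i), 0 = t_0 < t_1 < … < t_n < ∞, t_n ∈ I. If g = Σ_{i=1}^n b_i·χ_{A_i} with b_1 ≥ b_2 ≥ … ≥ b_n > 0 realizes the infimum in the definition of P_{φ,w}(f) (i.e. g ≺ w and ∫_I φ(f/g)·g = P_{φ,w}(f)), then there exist m ≤ n, indices 0 = i_0 < i_1 < … < i_m = n and reals λ_0, …, λ_{m−1} > 0 such that g = Σ_{j=0}^{m−1} λ_j·f·χ_{[t_{i_j}, t_{i_{j+1}})} and G(t_{i_j}) = W(t_{i_j}) for each j = 0, 1, …, m, where G(t) = ∫₀ᵗ g. -/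

import Mathlib

open MeasureTheory Set Filter
open scoped ENNReal

noncomputable section

/-- The decreasing rearrangement of `f` with respect to Lebesgue measure on `I`. -/
def decRearr (I : Set ℝ) (f : ℝ → ℝ) (t : ℝ) : ℝ :=
  sInf {l : ℝ | 0 < l ∧ volume {s | s ∈ I ∧ l < |f s|} ≤ ENNReal.ofReal t}

/-- `φ(a/b)·b` with the convention `φ(c/0)·0 = 0` if `c = 0` and `= ∞` if `c ≠ 0`. -/
def phiRatio (φ : ℝ → ℝ) (a b : ℝ) : ℝ≥0∞ :=
  if b = 0 then (if a = 0 then 0 else ⊤) else ENNReal.ofReal (φ (a / b) * b)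

/-- Submajorization `g ≺ w` on `I` : `∫₀ᵗ g* ≤ ∫₀ᵗ w` for all `t ∈ I`. -/
def Submaj (I : Set ℝ) (w g : ℝ → ℝ) : Prop :=
  ∀ t ∈ I, ∫⁻ s in Ioo (0:ℝ) t, ENNReal.ofReal (decRearr I g s)
      ≤ ∫⁻ s in Ioo (0:ℝ) t, ENNReal.ofReal (w s)

/-- The modular `P_{φ,w}(f) = inf { ∫_I φ(f*/|g|)|g| : g ≺ w }`. -/
def Pmod (I : Set ℝ) (φ w f : ℝ → ℝ) : ℝ≥0∞ :=
  sInf { v : ℝ≥0∞ | ∃ g : ℝ → ℝ, Measurable g ∧ Submaj I w g ∧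
      v = ∫⁻ t in I, phiRatio φ (decRearr I f t) |g t| }

/-- The modular `I_{φ,w}(f) = ∫_I φ(f*) w`. -/
def Imod (I : Set ℝ) (φ w f : ℝ → ℝ) : ℝ≥0∞ :=
  ∫⁻ t in I, ENNReal.ofReal (φ (decRearr I f t) * w t)

/-- The Marcinkiewicz norm `‖g‖_{M_W} = sup_{t ∈ I, t > 0} (∫₀ᵗ g*)/W(t)`. -/
def MWnorm (I : Set ℝ) (w g : ℝ → ℝ) : ℝ≥0∞ :=
  ⨆ t ∈ I ∩ Ioi (0:ℝ),
    (∫⁻ s in Ioo (0:ℝ) t, ENNReal.ofReal (decRearr I g s)) /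
      ENNReal.ofReal (∫ s in Ioo (0:ℝ) t, w s)

/-- An Orlicz function: `φ(0) = 0`, `φ` convex, strictly increasing, `[0,∞) → [0,∞)`. -/
def OrliczOn (φ : ℝ → ℝ) : Prop :=
  φ 0 = 0 ∧ ConvexOn ℝ (Ici 0) φ ∧ StrictMonoOn φ (Ici 0) ∧ ∀ t, 0 ≤ t → 0 ≤ φ t

/-- An N-function: an Orlicz function with `φ(t)/t → 0` at `0⁺` and `φ(t)/t → ∞` at `∞`. -/
def NFun (φ : ℝ → ℝ) : Prop :=
  OrliczOn φ ∧ Tendsto (fun t => φ t / t) (nhdsWithin 0 (Ioi 0)) (nhds 0) ∧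
    Tendsto (fun t => φ t / t) atTop atTop

/-- The complementary function `φ*(s) = sup_{t ≥ 0} (st - φ(t))`. -/
def phiStar (φ : ℝ → ℝ) (s : ℝ) : ℝ := sSup ((fun t => s * t - φ t) '' Ici 0)

/-- The (generalized) inverse of an Orlicz function. -/
def phiInv (φ : ℝ → ℝ) (s : ℝ) : ℝ := sInf {t : ℝ | 0 ≤ t ∧ s ≤ φ t}

/-- The Calderón–Lozanovskii function `ρ_φ(t,s) = φ⁻¹(s/t)·t`. -/
def rhoFun (φ : ℝ → ℝ) (t s : ℝ) : ℝ := phiInv φ (s / t) * t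

/-- A weight on `I`: positive, decreasing and locally integrable. -/
def IsWeight (I : Set ℝ) (w : ℝ → ℝ) : Prop :=
  (∀ t ∈ I, 0 < w t) ∧ AntitoneOn w I ∧ ∀ t ∈ I, IntegrableOn w (Ioo 0 t)

/-- `I = [0,α)` with `0 < α ≤ ∞`. -/
def OLDomain (I : Set ℝ) : Prop := I = Ici 0 ∨ ∃ α : ℝ, 0 < α ∧ I = Ico 0 α

/-- The step function `Σ aᵢ χ_{[tᵢ₋₁,tᵢ)}`. -/
def stepFun (n : ℕ) (tt : Fin (n+1) → ℝ) (a : Fin n → ℝ) (s : ℝ) : ℝ :=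
  ∑ i : Fin n, if tt i.castSucc ≤ s ∧ s < tt i.succ then a i else 0

/-- `R(a,b) = F(a,b)/W(a,b)` where `F(a,b) = ∫_a^b f`, `W(a,b) = ∫_a^b w`. -/
def Rquot (w f : ℝ → ℝ) (a b : ℝ) : ℝ :=
  (∫ s in Ioo a b, f s) / (∫ s in Ioo a b, w s)

/-- `(a,b)` is a level interval of `f` with respect to `w`. -/
def IsLI (I : Set ℝ) (w f : ℝ → ℝ) (a b : ℝ) : Prop :=
  0 ≤ a ∧ a < b ∧ Ioo a b ⊆ I ∧ 0 < Rquot w f a b ∧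
    ∀ t ∈ Ioo a b, Rquot w f a t ≤ Rquot w f a b

/-- `(a,b)` is a maximal level interval of `f` with respect to `w`. -/
def IsMLI (I : Set ℝ) (w f : ℝ → ℝ) (a b : ℝ) : Prop :=
  IsLI I w f a b ∧ ∀ a' b', IsLI I w f a' b' → Ioo a b ⊆ Ioo a' b' → a = a' ∧ b = b'

/-- `f0` is a level function of `f` with respect to `w`. -/
def IsLevelFun (I : Set ℝ) (w f f0 : ℝ → ℝ) : Prop :=
  (∀ a b, IsMLI I w f a b → ∀ t ∈ Ioo a b, f0 t = Rquot w f a b * w t) ∧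
  (∀ t ∈ I, (∀ a b, IsMLI I w f a b → t ∉ Ioo a b) → f0 t = f t)

/-- The Köthe dual norm of the Orlicz–Lorentz space `Λ_{φ,w}` with the Luxemburg norm. -/
def KDnorm (I : Set ℝ) (φ w f : ℝ → ℝ) : ℝ≥0∞ :=
  sSup { v : ℝ≥0∞ | ∃ g : ℝ → ℝ, Measurable g ∧
      ({ε : ℝ | 0 < ε ∧ Imod I φ w (fun t => g t / ε) ≤ 1}).Nonempty ∧
      sInf {ε : ℝ | 0 < ε ∧ Imod I φ w (fun t => g t / ε) ≤ 1} ≤ 1 ∧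
      IntegrableOn (fun t => f t * g t) I ∧
      v = ENNReal.ofReal (∫ t in I, f t * g t) }

namespace OLAux

/-! ### basic domain lemmas -/

lemma mem_of_le {I : Set ℝ} (hI : OLDomain I) {x y : ℝ} (hx : 0 ≤ x) (hxy : x ≤ y)
    (hy : y ∈ I) : x ∈ I := by
  rcases hI with h | ⟨α, hα, h⟩ <;> subst h
  · exact hx
  · exact ⟨hx, lt_of_le_of_lt hxy hy.2⟩

lemma nonneg_of_mem {I : Set ℝ} (hI : OLDomain I) {x : ℝ} (hx : x ∈ I) : 0 ≤ x := by
  rcases hI with h | ⟨α, hα, h⟩ <;> subst h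
  · exact hx
  · exact hx.1

/-! ### stepFun lemmas -/

variable {n : ℕ} {tt : Fin (n+1) → ℝ} {c : Fin n → ℝ}

lemma stepFun_apply (httm : StrictMono tt) (c : Fin n → ℝ) {i : Fin n} {s : ℝ}
    (h1 : tt i.castSucc ≤ s) (h2 : s < tt i.succ) : stepFun n tt c s = c i := by
  rw [stepFun, Finset.sum_eq_single i]
  · rw [if_pos ⟨h1, h2⟩]
  · intro j _ hj
    rw [if_neg]
    rintro ⟨hj1, hj2⟩
    rcases lt_or_gt_of_ne hj with hlt | hlt
    · have : tt j.succ ≤ tt i.castSucc := httm.monotone (Fin.succ_le_castSucc_iff.2 hlt)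
      linarith
    · have : tt i.succ ≤ tt j.castSucc := httm.monotone (Fin.succ_le_castSucc_iff.2 hlt)
      linarith
  · intro h; exact absurd (Finset.mem_univ i) h

lemma stepFun_zero_left (htt0 : tt 0 = 0) (httm : StrictMono tt) (c : Fin n → ℝ) {s : ℝ}
    (hs : s < 0) : stepFun n tt c s = 0 := by
  rw [stepFun]
  refine Finset.sum_eq_zero fun i _ => ?_
  rw [if_neg]
  rintro ⟨h1, -⟩
  have : (0:ℝ) ≤ tt i.castSucc := htt0 ▸ httm.monotone (Fin.zero_le _)
  linarith

lemma stepFun_zero_right (httm : StrictMono tt) (c : Fin n → ℝ) {s : ℝ}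
    (hs : tt (Fin.last n) ≤ s) : stepFun n tt c s = 0 := by
  rw [stepFun]
  refine Finset.sum_eq_zero fun i _ => ?_
  rw [if_neg]
  rintro ⟨-, h2⟩
  have : tt i.succ ≤ tt (Fin.last n) := httm.monotone (Fin.le_last _)
  linarith

lemma stepFun_nonneg (hc : ∀ i, 0 ≤ c i) (s : ℝ) : 0 ≤ stepFun n tt c s := by
  refine Finset.sum_nonneg fun i _ => ?_
  split <;> [exact hc i; exact le_rfl]

lemma exists_cell (httm : StrictMono tt) {s : ℝ} (h0 : tt 0 ≤ s) (h1 : s < tt (Fin.last n)) :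
    ∃ i : Fin n, tt i.castSucc ≤ s ∧ s < tt i.succ := by
  classical
  set T : Finset (Fin (n+1)) := Finset.univ.filter (fun j => tt j ≤ s) with hT
  have hne : T.Nonempty := ⟨0, by simp [hT, h0]⟩
  set j₀ := T.max' hne with hj₀
  have hj₀mem : j₀ ∈ T := T.max'_mem hne
  have hj₀le : tt j₀ ≤ s := by simpa [hT] using hj₀mem
  have hj₀ne : j₀ ≠ Fin.last n := by
    intro h; rw [h] at hj₀le; linarith
  refine ⟨j₀.castPred hj₀ne, ?_, ?_⟩
  · rwa [Fin.castSucc_castPred]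
  · by_contra hcon
    push_neg at hcon
    have hmem : (j₀.castPred hj₀ne).succ ∈ T := by simp [hT, hcon]
    have hle := T.le_max' _ hmem
    rw [← hj₀] at hle
    have : j₀ < (j₀.castPred hj₀ne).succ := by
      conv_lhs => rw [← Fin.castSucc_castPred j₀ hj₀ne]
      exact Fin.castSucc_lt_succ
    exact absurd hle (not_le.2 this)

lemma stepFun_eq_indicator (s : ℝ) :
    stepFun n tt c s = ∑ i : Fin n, (Ico (tt i.castSucc) (tt i.succ)).indicator
      (fun _ => c i) s := by
  rw [stepFun]
  refine Finset.sum_congr rfl fun i _ => ?_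
  simp [Set.indicator_apply, Set.mem_Ico]

lemma measurable_stepFun : Measurable (stepFun n tt c) := by
  have : stepFun n tt c = fun s => ∑ i : Fin n, (Ico (tt i.castSucc) (tt i.succ)).indicator
      (fun _ => c i) s := funext fun s => stepFun_eq_indicator s
  rw [this]
  exact Finset.measurable_sum _ fun i _ => measurable_const.indicator measurableSet_Ico

lemma integrable_stepFun : Integrable (stepFun n tt c) := by
  have : stepFun n tt c = fun s => ∑ i : Fin n, (Ico (tt i.castSucc) (tt i.succ)).indicator
      (fun _ => c i) s := funext fun s => stepFun_eq_indicator s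
  rw [this]
  refine integrable_finset_sum _ fun i _ => ?_
  rw [integrable_indicator_iff measurableSet_Ico]
  exact integrableOn_const measure_Ico_lt_top.ne


variable {n : ℕ} {tt : Fin (n+1) → ℝ} {c : Fin n → ℝ}

/-- partial mass of a step function up to node `k`. -/
def Gpart (n : ℕ) (tt : Fin (n+1) → ℝ) (c : Fin n → ℝ) (k : Fin (n+1)) : ℝ :=
  ∑ i ∈ Finset.univ.filter (fun i : Fin n => i.castSucc < k),
    c i * (tt i.succ - tt i.castSucc)

lemma integral_Ioo_split {f : ℝ → ℝ} {u v : ℝ} (hf : IntegrableOn f (Ioo 0 v))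
    (h0 : 0 ≤ u) (huv : u ≤ v) :
    ∫ s in Ioo (0:ℝ) v, f s = (∫ s in Ioo (0:ℝ) u, f s) + ∫ s in Ioo u v, f s := by
  rcases eq_or_lt_of_le h0 with h | h
  · simp [← h]
  · have hsub1 : Ioo (0:ℝ) u ⊆ Ioo 0 v := Ioo_subset_Ioo le_rfl huv
    have hsub2 : Ico u v ⊆ Ioo (0:ℝ) v := fun x hx => ⟨lt_of_lt_of_le h hx.1, hx.2⟩
    have hu : Ioo (0:ℝ) u ∪ Ico u v = Ioo 0 v := Ioo_union_Ico_eq_Ioo h huv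
    rw [← hu, setIntegral_union (by rw [Set.disjoint_left]; rintro x ⟨-, hx⟩ ⟨hx', -⟩; linarith) measurableSet_Ico
      (hf.mono_set (hu ▸ hsub1)) (hf.mono_set (hu ▸ hsub2)),
      integral_Ico_eq_integral_Ioo]

lemma tt_nonneg (htt0 : tt 0 = 0) (httm : StrictMono tt) (k : Fin (n+1)) : 0 ≤ tt k :=
  htt0 ▸ httm.monotone (Fin.zero_le _)

lemma integral_stepFun_node (htt0 : tt 0 = 0) (httm : StrictMono tt) (c : Fin n → ℝ)
    (k : Fin (n+1)) :
    ∫ s in Ioo (0:ℝ) (tt k), stepFun n tt c s = Gpart n tt c k := by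
  induction k using Fin.induction with
  | zero =>
      rw [htt0]
      have h1 : Ioo (0:ℝ) 0 = ∅ := Ioo_self 0
      have h2 : Finset.univ.filter (fun i : Fin n => i.castSucc < (0 : Fin (n+1))) = ∅ := by
        refine Finset.filter_false_of_mem fun i _ => ?_
        simp [Fin.le_zero_iff]
      simp [Gpart, h1, h2]
  | succ k ih =>
      have hsplit := integral_Ioo_split (u := tt k.castSucc) (v := tt k.succ)
        (integrable_stepFun (tt := tt) (c := c)).integrableOn
        (tt_nonneg htt0 httm _) (httm.monotone (Fin.castSucc_le_succ k))
      have hconst : ∫ s in Ioo (tt k.castSucc) (tt k.succ), stepFun n tt c s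
          = c k * (tt k.succ - tt k.castSucc) := by
        rw [setIntegral_congr_fun (g := fun _ => c k) measurableSet_Ioo
          (fun s hs => stepFun_apply httm c hs.1.le hs.2), setIntegral_const,
          measureReal_def, Real.volume_Ioo, ENNReal.toReal_ofReal
            (by linarith [httm ((Fin.castSucc_lt_succ (i := k)))] : (0:ℝ) ≤ tt k.succ - tt k.castSucc),
          smul_eq_mul, mul_comm]
      have hfilter : Finset.univ.filter (fun i : Fin n => i.castSucc < k.succ)
          = insert k (Finset.univ.filter (fun i : Fin n => i.castSucc < k.castSucc)) := by
        ext i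
        simp only [Finset.mem_insert, Finset.mem_filter, Finset.mem_univ, true_and,
          Fin.castSucc_lt_succ_iff, Fin.castSucc_lt_castSucc_iff]
        constructor
        · intro h
          rcases lt_or_eq_of_le h with h | h
          · exact Or.inr h
          · exact Or.inl h
        · rintro (rfl | h)
          · exact le_rfl
          · exact h.le
      rw [hsplit, ih, hconst, Gpart, Gpart, hfilter, Finset.sum_insert (by simp)]
      ring


/-! ### weight integral lemmas -/

variable {I : Set ℝ} {w : ℝ → ℝ}

lemma w_intOn (hI : OLDomain I) (hw : IsWeight I w) {u v : ℝ} (hu : 0 ≤ u) (hv : v ∈ I) :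
    IntegrableOn w (Ioo u v) :=
  (hw.2.2 v hv).mono_set (fun x hx => ⟨lt_of_le_of_lt hu hx.1, hx.2⟩)

lemma integral_w_nonneg (hI : OLDomain I) (hw : IsWeight I w) {u v : ℝ} (hu : 0 ≤ u)
    (hv : v ∈ I) : 0 ≤ ∫ s in Ioo u v, w s :=
  setIntegral_nonneg measurableSet_Ioo fun x hx =>
    (hw.1 x (mem_of_le hI (hu.trans hx.1.le) hx.2.le hv)).le

lemma integral_w_le (hI : OLDomain I) (hw : IsWeight I w) {u v : ℝ} (huI : u ∈ I)
    (hv : v ∈ I) (huv : u ≤ v) : ∫ s in Ioo u v, w s ≤ w u * (v - u) := by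
  have h0u : 0 ≤ u := nonneg_of_mem hI huI
  have h1 : ∫ s in Ioo u v, w s ≤ ∫ _s in Ioo u v, w u := by
    refine setIntegral_mono_on (w_intOn hI hw h0u hv)
      (integrableOn_const measure_Ioo_lt_top.ne) measurableSet_Ioo ?_
    intro x hx
    exact hw.2.1 huI (mem_of_le hI (h0u.trans hx.1.le) hx.2.le hv) hx.1.le
  calc ∫ s in Ioo u v, w s ≤ ∫ _s in Ioo u v, w u := h1
    _ = w u * (v - u) := by
        rw [setIntegral_const, measureReal_def, Real.volume_Ioo, ENNReal.toReal_ofReal (by linarith),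
          smul_eq_mul, mul_comm]

lemma le_integral_w (hI : OLDomain I) (hw : IsWeight I w) {u v : ℝ} (h0u : 0 ≤ u)
    (hv : v ∈ I) (huv : u ≤ v) : w v * (v - u) ≤ ∫ s in Ioo u v, w s := by
  have h1 : ∫ _s in Ioo u v, w v ≤ ∫ s in Ioo u v, w s := by
    refine setIntegral_mono_on (integrableOn_const measure_Ioo_lt_top.ne)
      (w_intOn hI hw h0u hv) measurableSet_Ioo ?_
    intro x hx
    exact hw.2.1 (mem_of_le hI (h0u.trans hx.1.le) hx.2.le hv) hv hx.2.le
  calc w v * (v - u) = ∫ _s in Ioo u v, w v := by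
        rw [setIntegral_const, measureReal_def, Real.volume_Ioo, ENNReal.toReal_ofReal (by linarith),
          smul_eq_mul, mul_comm]
    _ ≤ ∫ s in Ioo u v, w s := h1

/-! ### decRearr of a decreasing step function -/

lemma decRearr_nonneg (I : Set ℝ) (g : ℝ → ℝ) (t : ℝ) : 0 ≤ decRearr I g t :=
  Real.sInf_nonneg (fun _x hx => hx.1.le)

variable {n : ℕ} {tt : Fin (n+1) → ℝ} {c : Fin n → ℝ}

lemma support_subset (hI : OLDomain I) (htt0 : tt 0 = 0) (httm : StrictMono tt)
    (hcpos : ∀ i, 0 < c i) {l : ℝ} (hl : 0 < l)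
    (K : Fin (n+1)) (hK : ∀ j : Fin n, l < c j → j.succ ≤ K) :
    {x | x ∈ I ∧ l < |stepFun n tt c x|} ⊆ Ico 0 (tt K) := by
  rintro x ⟨hxI, hxl⟩
  have hstep : 0 ≤ stepFun n tt c x := stepFun_nonneg (fun i => (hcpos i).le) x
  rw [abs_of_nonneg hstep] at hxl
  have hx0 : 0 ≤ x := by
    by_contra h
    push_neg at h
    rw [stepFun_zero_left htt0 httm c h] at hxl; linarith
  have hxlast : x < tt (Fin.last n) := by
    by_contra h
    push_neg at h
    rw [stepFun_zero_right httm c h] at hxl; linarith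
  obtain ⟨j, hj1, hj2⟩ := exists_cell httm (htt0 ▸ hx0) hxlast
  rw [stepFun_apply httm c hj1 hj2] at hxl
  exact ⟨hx0, lt_of_lt_of_le hj2 (httm.monotone (hK j hxl))⟩

lemma decRearr_stepFun (hI : OLDomain I) (htt0 : tt 0 = 0) (httm : StrictMono tt)
    (httI : tt (Fin.last n) ∈ I) (hc : Antitone c) (hcpos : ∀ i, 0 < c i)
    {s : ℝ} (hs : s ∈ I) :
    decRearr I (stepFun n tt c) s = stepFun n tt c s := by
  have h0s : 0 ≤ s := nonneg_of_mem hI hs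
  rcases lt_or_ge s (tt (Fin.last n)) with hlt | hge
  · obtain ⟨i, hi1, hi2⟩ := exists_cell httm (htt0 ▸ h0s) hlt
    rw [stepFun_apply httm c hi1 hi2]
    have hmem : c i ∈ {l : ℝ | 0 < l ∧
        volume {x | x ∈ I ∧ l < |stepFun n tt c x|} ≤ ENNReal.ofReal s} := by
      refine ⟨hcpos i, ?_⟩
      have hsub := support_subset hI htt0 httm hcpos (hcpos i) i.castSucc ?_
      · calc volume {x | x ∈ I ∧ c i < |stepFun n tt c x|}
            ≤ volume (Ico 0 (tt i.castSucc)) := measure_mono hsub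
          _ = ENNReal.ofReal (tt i.castSucc - 0) := Real.volume_Ico
          _ ≤ ENNReal.ofReal s := ENNReal.ofReal_le_ofReal (by linarith)
      · intro j hj
        have hji : j < i := by
          by_contra hcon
          push_neg at hcon
          exact absurd (hc hcon) (not_le.2 hj)
        exact Fin.succ_le_castSucc_iff.2 hji
    refine le_antisymm (csInf_le ⟨0, fun x hx => hx.1.le⟩ hmem) ?_
    refine le_csInf ⟨c i, hmem⟩ ?_
    rintro l ⟨hl0, hlvol⟩
    by_contra hcon
    push_neg at hcon
    have hsup : Ico 0 (tt i.succ) ⊆ {x | x ∈ I ∧ l < |stepFun n tt c x|} := by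
      rintro x ⟨hx0, hxlt⟩
      have hxle : x ≤ tt (Fin.last n) :=
        le_trans hxlt.le (httm.monotone (Fin.le_last _))
      have hxI : x ∈ I := mem_of_le hI hx0 hxle httI
      have hxlast : x < tt (Fin.last n) :=
        lt_of_lt_of_le hxlt (httm.monotone (Fin.le_last _))
      obtain ⟨j, hj1, hj2⟩ := exists_cell httm (htt0 ▸ hx0) hxlast
      have hji : j ≤ i := by
        have : j.castSucc < i.succ := httm.lt_iff_lt.1 (lt_of_le_of_lt hj1 hxlt)
        exact Fin.castSucc_lt_succ_iff.1 this
      refine ⟨hxI, ?_⟩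
      rw [stepFun_apply httm c hj1 hj2,
        abs_of_nonneg (hcpos j).le]
      exact lt_of_lt_of_le hcon (hc hji)
    have hge' : volume (Ico 0 (tt i.succ)) ≤ volume {x | x ∈ I ∧ l < |stepFun n tt c x|} :=
      measure_mono hsup
    rw [Real.volume_Ico, sub_zero] at hge'
    have : ENNReal.ofReal (tt i.succ) ≤ ENNReal.ofReal s := le_trans hge' hlvol
    rw [ENNReal.ofReal_le_ofReal_iff h0s] at this
    linarith
  · rw [stepFun_zero_right httm c hge]
    have hset : {l : ℝ | 0 < l ∧
        volume {x | x ∈ I ∧ l < |stepFun n tt c x|} ≤ ENNReal.ofReal s} = Ioi 0 := by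
      ext l
      simp only [mem_setOf_eq, mem_Ioi]
      constructor
      · exact fun h => h.1
      · intro hl
        refine ⟨hl, ?_⟩
        have hsub := support_subset (c := c) hI htt0 httm hcpos hl (Fin.last n)
          (fun j _ => Fin.le_last _)
        calc volume {x | x ∈ I ∧ l < |stepFun n tt c x|}
            ≤ volume (Ico 0 (tt (Fin.last n))) := measure_mono hsub
          _ = ENNReal.ofReal (tt (Fin.last n) - 0) := Real.volume_Ico
          _ ≤ ENNReal.ofReal s := ENNReal.ofReal_le_ofReal (by linarith)
    rw [decRearr, hset, csInf_Ioi]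


/-! ### Submaj characterization -/

lemma Gpart_succ (tt : Fin (n+1) → ℝ) (c : Fin n → ℝ) (k : Fin n) :
    Gpart n tt c k.succ = Gpart n tt c k.castSucc + c k * (tt k.succ - tt k.castSucc) := by
  have hfilter : Finset.univ.filter (fun i : Fin n => i.castSucc < k.succ)
      = insert k (Finset.univ.filter (fun i : Fin n => i.castSucc < k.castSucc)) := by
    ext i
    simp only [Finset.mem_insert, Finset.mem_filter, Finset.mem_univ, true_and,
      Fin.castSucc_lt_succ_iff, Fin.castSucc_lt_castSucc_iff]
    constructor
    · intro h
      rcases lt_or_eq_of_le h with h | h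
      · exact Or.inr h
      · exact Or.inl h
    · rintro (rfl | h)
      · exact le_rfl
      · exact h.le
  rw [Gpart, Gpart, hfilter, Finset.sum_insert (by simp)]
  ring

lemma lintegral_ofReal_eq {f : ℝ → ℝ} {S : Set ℝ} (hf : IntegrableOn f S)
    (hnn : ∀ x ∈ S, 0 ≤ f x) (hS : MeasurableSet S) :
    ∫⁻ s in S, ENNReal.ofReal (f s) = ENNReal.ofReal (∫ s in S, f s) := by
  rw [← ofReal_integral_eq_lintegral_ofReal hf ((ae_restrict_iff' hS).2
    (Filter.Eventually.of_forall hnn))]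

lemma submaj_iff (hI : OLDomain I) (hw : IsWeight I w) (htt0 : tt 0 = 0)
    (httm : StrictMono tt) (httI : tt (Fin.last n) ∈ I) (hc : Antitone c)
    (hcpos : ∀ i, 0 < c i) :
    Submaj I w (stepFun n tt c) ↔
      ∀ t ∈ I, (∫ s in Ioo (0:ℝ) t, stepFun n tt c s) ≤ ∫ s in Ioo (0:ℝ) t, w s := by
  have key : ∀ t ∈ I, (∫⁻ s in Ioo (0:ℝ) t, ENNReal.ofReal (decRearr I (stepFun n tt c) s))
      = ENNReal.ofReal (∫ s in Ioo (0:ℝ) t, stepFun n tt c s) := by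
    intro t ht
    have hcongr : ∀ s ∈ Ioo (0:ℝ) t,
        ENNReal.ofReal (decRearr I (stepFun n tt c) s)
          = ENNReal.ofReal (stepFun n tt c s) := by
      intro s hs
      rw [decRearr_stepFun hI htt0 httm httI hc hcpos
        (mem_of_le hI hs.1.le hs.2.le ht)]
    rw [setLIntegral_congr_fun measurableSet_Ioo hcongr,
      lintegral_ofReal_eq integrable_stepFun.integrableOn
        (fun x _ => stepFun_nonneg (fun i => (hcpos i).le) x) measurableSet_Ioo]
  have keyw : ∀ t ∈ I, (∫⁻ s in Ioo (0:ℝ) t, ENNReal.ofReal (w s))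
      = ENNReal.ofReal (∫ s in Ioo (0:ℝ) t, w s) := by
    intro t ht
    refine lintegral_ofReal_eq (hw.2.2 t ht) (fun x hx => ?_) measurableSet_Ioo
    exact (hw.1 x (mem_of_le hI hx.1.le hx.2.le ht)).le
  constructor
  · intro h t ht
    have h2 := h t ht
    rw [key t ht, keyw t ht] at h2
    exact (ENNReal.ofReal_le_ofReal_iff (integral_w_nonneg hI hw le_rfl ht)).1 h2
  · intro h t ht
    rw [key t ht, keyw t ht]
    exact ENNReal.ofReal_le_ofReal (h t ht)

lemma tt_mem (hI : OLDomain I) (htt0 : tt 0 = 0) (httm : StrictMono tt)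
    (httI : tt (Fin.last n) ∈ I) (k : Fin (n+1)) : tt k ∈ I :=
  mem_of_le hI (tt_nonneg htt0 httm k) (httm.monotone (Fin.le_last _)) httI

lemma nodes_of_submaj (hI : OLDomain I) (hw : IsWeight I w) (htt0 : tt 0 = 0)
    (httm : StrictMono tt) (httI : tt (Fin.last n) ∈ I) (hc : Antitone c)
    (hcpos : ∀ i, 0 < c i) (hsub : Submaj I w (stepFun n tt c)) (k : Fin (n+1)) :
    Gpart n tt c k ≤ ∫ s in Ioo (0:ℝ) (tt k), w s := by
  rw [← integral_stepFun_node htt0 httm c k]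
  exact (submaj_iff hI hw htt0 httm httI hc hcpos).1 hsub (tt k)
    (tt_mem hI htt0 httm httI k)

lemma submaj_of_nodes (hI : OLDomain I) (hw : IsWeight I w) (htt0 : tt 0 = 0)
    (httm : StrictMono tt) (httI : tt (Fin.last n) ∈ I) (hc : Antitone c)
    (hcpos : ∀ i, 0 < c i)
    (hnode : ∀ k : Fin (n+1), Gpart n tt c k ≤ ∫ s in Ioo (0:ℝ) (tt k), w s) :
    Submaj I w (stepFun n tt c) := by
  rw [submaj_iff hI hw htt0 httm httI hc hcpos]
  intro t ht
  have h0t : 0 ≤ t := nonneg_of_mem hI ht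
  rcases le_or_gt (tt (Fin.last n)) t with hge | hlt
  · -- beyond the last node
    have h0last : 0 ≤ tt (Fin.last n) := tt_nonneg htt0 httm _
    have hsplit := integral_Ioo_split (f := stepFun n tt c) (u := tt (Fin.last n)) (v := t)
      integrable_stepFun.integrableOn h0last hge
    have hzero : ∫ s in Ioo (tt (Fin.last n)) t, stepFun n tt c s = 0 := by
      rw [setIntegral_congr_fun (g := fun _ => (0:ℝ)) measurableSet_Ioo
        (fun s hs => stepFun_zero_right httm c hs.1.le)]
      simp
    have hwsplit := integral_Ioo_split (f := w) (u := tt (Fin.last n)) (v := t)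
      (hw.2.2 t ht) h0last hge
    have hwtail : 0 ≤ ∫ s in Ioo (tt (Fin.last n)) t, w s :=
      integral_w_nonneg hI hw h0last ht
    have hlastnode := hnode (Fin.last n)
    rw [← integral_stepFun_node htt0 httm c (Fin.last n)] at hlastnode
    rw [hsplit, hzero, hwsplit]
    linarith
  · -- inside a cell
    obtain ⟨k, hk1, hk2⟩ := exists_cell httm (htt0 ▸ h0t) hlt
    set u := tt k.castSucc with hu
    set v := tt k.succ with hv
    have h0u : 0 ≤ u := tt_nonneg htt0 httm _
    have huI : u ∈ I := tt_mem hI htt0 httm httI _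
    have hvI : v ∈ I := tt_mem hI htt0 httm httI _
    have huv : u < v := httm ((Fin.castSucc_lt_succ (i := k)))
    -- step function integral up to t
    have hsplit := integral_Ioo_split (f := stepFun n tt c) (u := u) (v := t)
      integrable_stepFun.integrableOn h0u hk1
    have hconst : ∫ s in Ioo u t, stepFun n tt c s = c k * (t - u) := by
      rw [setIntegral_congr_fun (g := fun _ => c k) measurableSet_Ioo
        (fun s hs => stepFun_apply httm c hs.1.le (lt_trans hs.2 hk2)),
        setIntegral_const, measureReal_def, Real.volume_Ioo,
        ENNReal.toReal_ofReal (by linarith), smul_eq_mul, mul_comm]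
    -- weight splits
    have hwsplit1 := integral_Ioo_split (f := w) (u := u) (v := t) (hw.2.2 t ht) h0u hk1
    have hwsplit2 := integral_Ioo_split (f := w) (u := t) (v := v) (hw.2.2 v hvI) h0t hk2.le
    have hwsplit3 := integral_Ioo_split (f := w) (u := u) (v := v) (hw.2.2 v hvI) h0u
      (le_trans hk1 hk2.le)
    have hiii := le_integral_w hI hw h0u ht hk1
    have hiv := integral_w_le hI hw ht hvI hk2.le
    have hGu := hnode k.castSucc
    have hGv := hnode k.succ
    rw [Gpart_succ] at hGv
    have hck : 0 < c k := hcpos k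
    have hwt : 0 < w t := hw.1 t ht
    rw [hsplit, hconst, integral_stepFun_node htt0 httm c k.castSucc, hwsplit1]
    -- chord inequality
    nlinarith [mul_le_mul_of_nonneg_right hGv (sub_nonneg.2 hk1),
      mul_le_mul_of_nonneg_right hiv (sub_nonneg.2 hk1),
      mul_le_mul_of_nonneg_right hiii (sub_nonneg.2 hk2.le),
      mul_le_mul_of_nonneg_right hGu (sub_nonneg.2 (le_trans hk1 hk2.le)),
      mul_le_mul_of_nonneg_right hGu (sub_nonneg.2 hk2.le),
      mul_pos hck hwt]


/-! ### value of the modular on step functions -/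

/-- the modular value `∑ φ(aᵢ/cᵢ)cᵢΔᵢ`. -/
def Phisum (φ : ℝ → ℝ) (n : ℕ) (tt : Fin (n+1) → ℝ) (a c : Fin n → ℝ) : ℝ :=
  ∑ i : Fin n, φ (a i / c i) * c i * (tt i.succ - tt i.castSucc)

lemma cells_disjoint (httm : StrictMono tt) {j k : Fin n} (hjk : j ≠ k) {t : ℝ}
    (h1 : tt j.castSucc ≤ t) (h2 : t < tt j.succ) (h3 : tt k.castSucc ≤ t)
    (h4 : t < tt k.succ) : False := by
  rcases lt_or_gt_of_ne hjk with hlt | hlt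
  · have : tt j.succ ≤ tt k.castSucc := httm.monotone (Fin.succ_le_castSucc_iff.2 hlt)
    linarith
  · have : tt k.succ ≤ tt j.castSucc := httm.monotone (Fin.succ_le_castSucc_iff.2 hlt)
    linarith

lemma cell_subset (hI : OLDomain I) (htt0 : tt 0 = 0) (httm : StrictMono tt)
    (httI : tt (Fin.last n) ∈ I) (i : Fin n) :
    Ico (tt i.castSucc) (tt i.succ) ⊆ I := by
  rintro x ⟨h1, h2⟩
  have h0 : 0 ≤ x := le_trans (tt_nonneg htt0 httm _) h1
  have hle : x ≤ tt (Fin.last n) := le_trans h2.le (httm.monotone (Fin.le_last _))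
  exact mem_of_le hI h0 hle httI

lemma value_eq {φ : ℝ → ℝ} {a : Fin n → ℝ} (hI : OLDomain I) (hφ : OrliczOn φ)
    (htt0 : tt 0 = 0) (httm : StrictMono tt) (httI : tt (Fin.last n) ∈ I)
    (hapos : ∀ i, 0 < a i) (hcpos : ∀ i, 0 < c i) :
    (∫⁻ t in I, phiRatio φ (stepFun n tt a t) (stepFun n tt c t))
      = ENNReal.ofReal (Phisum φ n tt a c) := by
  have hpt : ∀ t ∈ I, phiRatio φ (stepFun n tt a t) (stepFun n tt c t)
      = ∑ i : Fin n, (Ico (tt i.castSucc) (tt i.succ)).indicator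
          (fun _ => ENNReal.ofReal (φ (a i / c i) * c i)) t := by
    intro t ht
    have h0t : 0 ≤ t := nonneg_of_mem hI ht
    rcases lt_or_ge t (tt (Fin.last n)) with hlt | hge
    · obtain ⟨k, hk1, hk2⟩ := exists_cell httm (htt0 ▸ h0t) hlt
      rw [stepFun_apply httm a hk1 hk2, stepFun_apply httm c hk1 hk2, phiRatio,
        if_neg (ne_of_gt (hcpos k)), Finset.sum_eq_single k]
      · rw [Set.indicator_of_mem (mem_Ico.2 ⟨hk1, hk2⟩)]
      · intro j _ hj
        rw [Set.indicator_of_notMem]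
        rintro ⟨h1, h2⟩
        exact cells_disjoint httm hj h1 h2 hk1 hk2
      · intro h
        exact absurd (Finset.mem_univ k) h
    · rw [stepFun_zero_right httm a hge, stepFun_zero_right httm c hge, phiRatio,
        if_pos rfl, if_pos rfl]
      symm
      refine Finset.sum_eq_zero fun i _ => ?_
      rw [Set.indicator_of_notMem]
      rintro ⟨h1, h2⟩
      have : tt i.succ ≤ tt (Fin.last n) := httm.monotone (Fin.le_last _)
      linarith
  rw [setLIntegral_congr_fun (hI.elim (fun h => h ▸ measurableSet_Ici)
      (fun ⟨α, _, h⟩ => h ▸ measurableSet_Ico)) hpt,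
    lintegral_finset_sum _ (fun i _ => (measurable_const.indicator measurableSet_Ico))]
  have hterm : ∀ i : Fin n,
      (∫⁻ t in I, (Ico (tt i.castSucc) (tt i.succ)).indicator
        (fun _ => ENNReal.ofReal (φ (a i / c i) * c i)) t)
      = ENNReal.ofReal (φ (a i / c i) * c i * (tt i.succ - tt i.castSucc)) := by
    intro i
    rw [lintegral_indicator measurableSet_Ico, setLIntegral_const,
      Measure.restrict_apply measurableSet_Ico,
      Set.inter_eq_left.2 (cell_subset hI htt0 httm httI i), Real.volume_Ico,
      ← ENNReal.ofReal_mul (mul_nonneg (hφ.2.2.2 _ (div_nonneg (hapos i).le (hcpos i).le))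
        (hcpos i).le)]
  rw [Finset.sum_congr rfl (fun i _ => hterm i), Phisum,
    ENNReal.ofReal_sum_of_nonneg]
  intro i _
  have h1 : (0:ℝ) ≤ φ (a i / c i) := hφ.2.2.2 _ (div_nonneg (hapos i).le (hcpos i).le)
  have h2 := (httm ((Fin.castSucc_lt_succ (i := i)))).le
  exact mul_nonneg (mul_nonneg h1 (hcpos i).le) (by linarith)


/-! ### convexity lemmas -/

lemma measI (hI : OLDomain I) : MeasurableSet I :=
  hI.elim (fun h => h ▸ measurableSet_Ici) (fun ⟨_, _, h⟩ => h ▸ measurableSet_Ico)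

variable {φ : ℝ → ℝ}

lemma psi_mono (hφ : OrliczOn φ) (hsc : StrictConvexOn ℝ (Ici 0) φ) {u v : ℝ}
    (hu : 0 < u) (huv : u < v) : φ u / u < φ v / v := by
  have h0 : φ 0 = 0 := hφ.1
  have hv : 0 < v := lt_trans hu huv
  have h := hsc.2 (Set.self_mem_Ici) (show v ∈ Ici 0 from hv.le)
    (ne_of_lt hv)
    (show (0:ℝ) < 1 - u/v by rw [sub_pos]; exact (div_lt_one hv).2 huv)
    (show (0:ℝ) < u/v by positivity) (show 1 - u/v + u/v = 1 by ring)
  rw [smul_eq_mul, smul_eq_mul, smul_eq_mul, smul_eq_mul, mul_zero, zero_add, h0,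
    mul_zero, zero_add] at h
  have harg : u / v * v = u := by field_simp
  rw [harg] at h
  rw [div_lt_div_iff₀ hu hv]
  have hh := mul_lt_mul_of_pos_right h hv
  have he : u / v * φ v * v = u * φ v := by field_simp
  nlinarith

lemma ratio_strict_anti (hφ : OrliczOn φ) (hsc : StrictConvexOn ℝ (Ici 0) φ)
    {A x y : ℝ} (hA : 0 < A) (hx : 0 < x) (hxy : x < y) :
    φ (A / y) * y < φ (A / x) * x := by
  have hy : 0 < y := lt_trans hx hxy
  have h1 : 0 < A / y := by positivity
  have h2 : A / y < A / x := div_lt_div_of_pos_left hA hx hxy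
  have h := psi_mono hφ hsc h1 h2
  have e1 : φ (A/y) / (A/y) * A = φ (A/y) * y := by field_simp
  have e2 : φ (A/x) / (A/x) * A = φ (A/x) * x := by field_simp
  nlinarith [mul_lt_mul_of_pos_right h hA]

lemma perspective (hφ : OrliczOn φ) {A x y θ : ℝ} (hA : 0 ≤ A) (hx : 0 < x) (hy : 0 < y)
    (hθ0 : 0 ≤ θ) (hθ1 : θ ≤ 1) :
    φ (A / ((1-θ)*x + θ*y)) * ((1-θ)*x + θ*y)
      ≤ (1-θ) * (φ (A/x) * x) + θ * (φ (A/y) * y) := by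
  set z := (1-θ)*x + θ*y with hz
  have hz0 : 0 < z := by
    rcases lt_or_eq_of_le hθ1 with h | h <;> rw [hz] <;> nlinarith
  have hμν : (1-θ)*x/z + θ*y/z = 1 := by field_simp; linarith
  have h := hφ.2.1.2 (show A/x ∈ Ici 0 from div_nonneg hA hx.le)
    (show A/y ∈ Ici 0 from div_nonneg hA hy.le)
    (div_nonneg (mul_nonneg (by linarith) hx.le) hz0.le) (div_nonneg (mul_nonneg hθ0 hy.le) hz0.le) hμν
  rw [smul_eq_mul, smul_eq_mul, smul_eq_mul, smul_eq_mul] at h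
  have harg : (1-θ)*x/z * (A/x) + θ*y/z * (A/y) = A / z := by field_simp; ring
  rw [harg] at h
  have h2 := mul_le_mul_of_nonneg_right h hz0.le
  calc φ (A/z) * z ≤ ((1-θ)*x/z*φ (A/x) + θ*y/z*φ (A/y)) * z := h2
    _ = (1-θ) * (φ (A/x) * x) + θ * (φ (A/y) * y) := by field_simp

lemma Phisum_nonneg {a : Fin n → ℝ} (hφ : OrliczOn φ) (httm : StrictMono tt)
    (hapos : ∀ i, 0 < a i) (hcpos : ∀ i, 0 < c i) : 0 ≤ Phisum φ n tt a c := by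
  refine Finset.sum_nonneg fun i _ => ?_
  have h1 : (0:ℝ) ≤ φ (a i / c i) := hφ.2.2.2 _ (div_nonneg (hapos i).le (hcpos i).le)
  have h2 := (httm ((Fin.castSucc_lt_succ (i := i)))).le
  exact mul_nonneg (mul_nonneg h1 (hcpos i).le) (by linarith)

/-! ### the main minimality inequality -/

lemma main_ineq {a b : Fin n → ℝ} (hI : OLDomain I) (hφ : OrliczOn φ)
    (hw : IsWeight I w) (htt0 : tt 0 = 0) (httm : StrictMono tt)
    (httI : tt (Fin.last n) ∈ I) (ha : StrictAnti a) (hapos : ∀ i, 0 < a i)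
    (hmin : (∫⁻ t in I, phiRatio φ (stepFun n tt a t) (stepFun n tt b t))
        = Pmod I φ w (stepFun n tt a))
    (hbpos : ∀ i, 0 < b i)
    {c : Fin n → ℝ} (hc : Antitone c) (hcpos : ∀ i, 0 < c i)
    (hnode : ∀ k : Fin (n+1), Gpart n tt c k ≤ ∫ s in Ioo (0:ℝ) (tt k), w s) :
    Phisum φ n tt a b ≤ Phisum φ n tt a c := by
  have hcand : ENNReal.ofReal (Phisum φ n tt a c) ∈
      { v : ℝ≥0∞ | ∃ g : ℝ → ℝ, Measurable g ∧ Submaj I w g ∧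
        v = ∫⁻ t in I, phiRatio φ (decRearr I (stepFun n tt a) t) |g t| } := by
    refine ⟨stepFun n tt c, measurable_stepFun,
      submaj_of_nodes hI hw htt0 httm httI hc hcpos hnode, ?_⟩
    have hco : ∀ t ∈ I, phiRatio φ (decRearr I (stepFun n tt a) t) |stepFun n tt c t|
        = phiRatio φ (stepFun n tt a t) (stepFun n tt c t) := by
      intro t ht
      rw [decRearr_stepFun hI htt0 httm httI ha.antitone hapos ht,
        abs_of_nonneg (stepFun_nonneg (fun i => (hcpos i).le) t)]
    rw [setLIntegral_congr_fun (measI hI) hco,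
      value_eq hI hφ htt0 httm httI hapos hcpos]
  have hle : Pmod I φ w (stepFun n tt a) ≤ ENNReal.ofReal (Phisum φ n tt a c) :=
    sInf_le hcand
  rw [← hmin, value_eq hI hφ htt0 httm httI hapos hbpos] at hle
  exact (ENNReal.ofReal_le_ofReal_iff (Phisum_nonneg hφ httm hapos hcpos)).1 hle


/-! ### more Gpart helpers -/

lemma Gpart_zero (tt : Fin (n+1) → ℝ) (c : Fin n → ℝ) : Gpart n tt c 0 = 0 := by
  have h2 : Finset.univ.filter (fun i : Fin n => i.castSucc < (0 : Fin (n+1))) = ∅ := by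
    refine Finset.filter_false_of_mem fun i _ => ?_
    simp [Fin.le_zero_iff]
  rw [Gpart, h2, Finset.sum_empty]

lemma Gpart_congr {c d : Fin n → ℝ} {k : Fin (n+1)} (tt : Fin (n+1) → ℝ)
    (h : ∀ i : Fin n, i.castSucc < k → c i = d i) : Gpart n tt c k = Gpart n tt d k := by
  refine Finset.sum_congr rfl fun i hi => ?_
  rw [h i (Finset.mem_filter.1 hi).2]

lemma Gpart_sub_integral (htt0 : tt 0 = 0) (httm : StrictMono tt) (c : Fin n → ℝ)
    {k₁ k₂ : Fin (n+1)} (h : k₁ ≤ k₂) :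
    Gpart n tt c k₂ = Gpart n tt c k₁ + ∫ s in Ioo (tt k₁) (tt k₂), stepFun n tt c s := by
  rw [← integral_stepFun_node htt0 httm c, ← integral_stepFun_node htt0 httm c,
    integral_Ioo_split integrable_stepFun.integrableOn (tt_nonneg htt0 httm k₁)
      (httm.monotone h)]

lemma Gpart_flat (htt0 : tt 0 = 0) (httm : StrictMono tt) {c : Fin n → ℝ}
    {k₁ k₂ : Fin (n+1)} (h : k₁ ≤ k₂) {β : ℝ}
    (hc : ∀ i : Fin n, k₁ ≤ i.castSucc → i.castSucc < k₂ → c i = β) :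
    Gpart n tt c k₂ = Gpart n tt c k₁ + β * (tt k₂ - tt k₁) := by
  rw [Gpart_sub_integral htt0 httm c h]
  congr 1
  rcases eq_or_lt_of_le h with rfl | hlt
  · simp
  have hconst : ∀ s ∈ Ioo (tt k₁) (tt k₂), stepFun n tt c s = β := by
    intro s hs
    have h0s : 0 ≤ s := le_trans (tt_nonneg htt0 httm k₁) hs.1.le
    have hslast : s < tt (Fin.last n) :=
      lt_of_lt_of_le hs.2 (httm.monotone (Fin.le_last _))
    obtain ⟨i, hi1, hi2⟩ := exists_cell httm (htt0 ▸ h0s) hslast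
    have hik2 : i.castSucc < k₂ := httm.lt_iff_lt.1 (lt_of_le_of_lt hi1 hs.2)
    have hik1 : k₁ ≤ i.castSucc := by
      rw [Fin.le_castSucc_iff]
      exact httm.lt_iff_lt.1 (lt_of_lt_of_le hs.1 hi2.le)
    rw [stepFun_apply httm c hi1 hi2]
    exact hc i hik1 hik2
  rw [setIntegral_congr_fun measurableSet_Ioo hconst, setIntegral_const, measureReal_def, Real.volume_Ioo,
    ENNReal.toReal_ofReal (by linarith [httm.monotone h] : (0:ℝ) ≤ tt k₂ - tt k₁),
    smul_eq_mul, mul_comm]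

lemma Wk_split {I : Set ℝ} {w : ℝ → ℝ} (hI : OLDomain I) (hw : IsWeight I w)
    (htt0 : tt 0 = 0) (httm : StrictMono tt) (httI : tt (Fin.last n) ∈ I)
    {k₁ k₂ : Fin (n+1)} (h : k₁ ≤ k₂) :
    (∫ s in Ioo (0:ℝ) (tt k₂), w s)
      = (∫ s in Ioo (0:ℝ) (tt k₁), w s) + ∫ s in Ioo (tt k₁) (tt k₂), w s :=
  integral_Ioo_split (hw.2.2 _ (tt_mem hI htt0 httm httI k₂)) (tt_nonneg htt0 httm k₁)
    (httm.monotone h)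


/-! ### Claim A : tightness at the last node -/

lemma tight_last {I : Set ℝ} {w φ : ℝ → ℝ} {a b : Fin n → ℝ}
    (hI : OLDomain I) (hφ : OrliczOn φ) (hsc : StrictConvexOn ℝ (Ici 0) φ)
    (hw : IsWeight I w) (hn : 0 < n) (htt0 : tt 0 = 0) (httm : StrictMono tt)
    (httI : tt (Fin.last n) ∈ I) (ha : StrictAnti a) (hapos : ∀ i, 0 < a i)
    (hb : Antitone b) (hbpos : ∀ i, 0 < b i)
    (hsub : Submaj I w (stepFun n tt b))
    (hmin : (∫⁻ t in I, phiRatio φ (stepFun n tt a t) (stepFun n tt b t))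
        = Pmod I φ w (stepFun n tt a)) :
    Gpart n tt b (Fin.last n) = ∫ s in Ioo (0:ℝ) (tt (Fin.last n)), w s := by
  classical
  by_contra hne
  have hnode := nodes_of_submaj hI hw htt0 httm httI hb hbpos hsub
  have hnA : Gpart n tt b (Fin.last n) < ∫ s in Ioo (0:ℝ) (tt (Fin.last n)), w s :=
    lt_of_le_of_ne (hnode _) hne
  set lc : Fin n := ⟨n-1, by omega⟩ with hlc
  set Jset : Finset (Fin n) := Finset.univ.filter (fun j => ∀ i, j ≤ i → b i = b lc)
    with hJset
  have hJne : Jset.Nonempty := by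
    refine ⟨lc, ?_⟩
    simp only [hJset, Finset.mem_filter, Finset.mem_univ, true_and]
    intro i hi
    have hle : i ≤ lc := by
      rw [Fin.le_def]
      have := i.2
      simp only [hlc]
      omega
    rw [le_antisymm hle hi]
  set J := Jset.min' hJne with hJdef
  have hJmem : J ∈ Jset := Jset.min'_mem hJne
  have hJflat : ∀ i, J ≤ i → b i = b lc := by
    simpa only [hJset, Finset.mem_filter, Finset.mem_univ, true_and] using hJmem
  have hbJ : b J = b lc := hJflat J le_rfl
  -- all nodes strictly past J are slack
  have hslack : ∀ K : Fin (n+1), J.castSucc < K →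
      Gpart n tt b K < ∫ s in Ioo (0:ℝ) (tt K), w s := by
    intro K hK
    rcases lt_or_eq_of_le (hnode K) with h | h
    · exact h
    exfalso
    have hKlast : K ≠ Fin.last n := by
      rintro rfl; exact hne h
    have hKlt : K < Fin.last n := lt_of_le_of_ne (Fin.le_last K) hKlast
    have hflat1 : Gpart n tt b K = Gpart n tt b J.castSucc + b lc * (tt K - tt J.castSucc) :=
      Gpart_flat htt0 httm hK.le
        (fun i h1 _ => hJflat i (Fin.castSucc_le_castSucc_iff.1 h1))
    have hflat2 : Gpart n tt b (Fin.last n) = Gpart n tt b K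
        + b lc * (tt (Fin.last n) - tt K) :=
      Gpart_flat htt0 httm hKlt.le
        (fun i h1 _ => hJflat i (le_of_lt (Fin.castSucc_lt_castSucc_iff.1
          (lt_of_lt_of_le hK h1))))
    have hW1 := Wk_split hI hw htt0 httm httI hK.le
    have hW2 := Wk_split hI hw htt0 httm httI hKlt.le
    have hG0 := hnode J.castSucc
    have htKI : tt K ∈ I := tt_mem hI htt0 httm httI K
    have hwl := le_integral_w hI hw (tt_nonneg htt0 httm J.castSucc) htKI
      (httm.monotone hK.le)
    have hwu := integral_w_le hI hw htKI httI (httm.monotone hKlt.le)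
    have hwKβ : w (tt K) ≤ b lc := by
      have h1 : w (tt K) * (tt K - tt J.castSucc) ≤ b lc * (tt K - tt J.castSucc) := by
        linarith
      exact le_of_mul_le_mul_right h1 (sub_pos.2 (httm hK))
    have hfin := mul_le_mul_of_nonneg_right hwKβ
      (sub_nonneg.2 (httm.monotone hKlt.le) : (0:ℝ) ≤ tt (Fin.last n) - tt K)
    linarith
  -- choose the perturbation size
  set L := tt (Fin.last n) - tt J.castSucc with hLdef
  have hLpos : 0 < L := sub_pos.2 (httm (Fin.castSucc_lt_last J))
  set T2 : Finset (Fin (n+1)) := Finset.univ.filter (fun k => J.castSucc < k) with hT2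
  have hT2ne : T2.Nonempty := ⟨Fin.last n, by
    simp only [hT2, Finset.mem_filter, Finset.mem_univ, true_and]
    exact Fin.castSucc_lt_last J⟩
  set θ₁ := (T2.inf' hT2ne
    (fun k => (∫ s in Ioo (0:ℝ) (tt k), w s) - Gpart n tt b k)) / L with hθ₁def
  have hθ₁pos : 0 < θ₁ := by
    refine div_pos ((Finset.lt_inf'_iff _).2 (fun k hk => sub_pos.2 (hslack k ?_))) hLpos
    simpa only [hT2, Finset.mem_filter, Finset.mem_univ, true_and] using hk
  set θ₂ : ℝ := if hJ0 : (J : ℕ) = 0 then 1 else b ⟨(J:ℕ)-1, by omega⟩ - b J with hθ₂def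
  have hθ₂pos : 0 < θ₂ := by
    rw [hθ₂def]
    split
    · exact one_pos
    · rename_i hJ0
      set Jp : Fin n := ⟨(J:ℕ)-1, by omega⟩ with hJp
      have hJpltJ : Jp < J := by
        rw [Fin.lt_def]; simp only [hJp]; omega
      have hJpnot : Jp ∉ Jset := by
        intro hmem
        exact absurd (Jset.min'_le _ hmem) (not_le.2 hJpltJ)
      have hnotall : ¬ ∀ i, Jp ≤ i → b i = b lc := by
        simpa only [hJset, Finset.mem_filter, Finset.mem_univ, true_and] using hJpnot
      push_neg at hnotall
      obtain ⟨i, hi1, hi2⟩ := hnotall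
      have hiJ : ¬ J ≤ i := fun h => hi2 (hJflat i h)
      have hieq : i = Jp := by
        refine le_antisymm ?_ hi1
        rw [Fin.le_def]
        simp only [hJp]
        have : (i:ℕ) < (J:ℕ) := by
          by_contra hcon
          exact hiJ (Fin.le_def.2 (by omega))
        omega
      rw [hieq] at hi2
      have hle : b J ≤ b Jp := hb hJpltJ.le
      rw [hbJ] at hle ⊢
      exact sub_pos.2 (lt_of_le_of_ne hle (by rw [← hbJ] at hi2; exact fun hx => hi2 (by
        rw [← hx, hbJ])))
  set θ := min θ₁ θ₂ with hθdef
  have hθpos : 0 < θ := lt_min hθ₁pos hθ₂pos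
  set c : Fin n → ℝ := fun i => if J ≤ i then b i + θ else b i with hcdef
  have hcflat : ∀ i, J ≤ i → c i = b lc + θ := by
    intro i hi
    simp only [hcdef, if_pos hi, hJflat i hi]
  have hcb : ∀ i, ¬ J ≤ i → c i = b i := by
    intro i hi
    simp only [hcdef, if_neg hi]
  have hcpos : ∀ i, 0 < c i := by
    intro i
    simp only [hcdef]
    split
    · linarith [hbpos i]
    · exact hbpos i
  have hcanti : Antitone c := by
    intro i j hij
    by_cases hJi : J ≤ i
    · rw [hcflat i hJi, hcflat j (le_trans hJi hij)]
    · rw [hcb i hJi]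
      by_cases hJj : J ≤ j
      · rw [hcflat j hJj]
        have hJ0 : (J:ℕ) ≠ 0 := by
          intro h
          exact hJi (Fin.le_def.2 (by omega))
        set Jp : Fin n := ⟨(J:ℕ)-1, by omega⟩ with hJp
        have hiJp : i ≤ Jp := by
          rw [Fin.le_def]
          simp only [hJp]
          have : (i:ℕ) < (J:ℕ) := by
            by_contra hcon
            exact hJi (Fin.le_def.2 (by omega))
          omega
        have hbi : b Jp ≤ b i := hb hiJp
        have hθ2 : θ ≤ θ₂ := min_le_right _ _
        rw [hθ₂def, dif_neg hJ0] at hθ2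
        linarith
      · rw [hcb j hJj]
        exact hb hij
  have hcnode : ∀ k : Fin (n+1), Gpart n tt c k ≤ ∫ s in Ioo (0:ℝ) (tt k), w s := by
    intro k
    by_cases hk : J.castSucc < k
    · have hflatc : Gpart n tt c k = Gpart n tt c J.castSucc
          + (b lc + θ) * (tt k - tt J.castSucc) :=
        Gpart_flat htt0 httm hk.le
          (fun i h1 _ => hcflat i (Fin.castSucc_le_castSucc_iff.1 h1))
      have hflatb : Gpart n tt b k = Gpart n tt b J.castSucc
          + b lc * (tt k - tt J.castSucc) :=
        Gpart_flat htt0 httm hk.le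
          (fun i h1 _ => hJflat i (Fin.castSucc_le_castSucc_iff.1 h1))
      have hcongr : Gpart n tt c J.castSucc = Gpart n tt b J.castSucc :=
        Gpart_congr tt (fun i hi => hcb i
          (fun hJi => absurd (Fin.castSucc_lt_castSucc_iff.1 hi)
            (not_lt.2 hJi)))
      have hinf : θ₁ * L ≤ (∫ s in Ioo (0:ℝ) (tt k), w s) - Gpart n tt b k := by
        rw [hθ₁def, div_mul_cancel₀ _ (ne_of_gt hLpos)]
        exact Finset.inf'_le _ (by
          simp only [hT2, Finset.mem_filter, Finset.mem_univ, true_and]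
          exact hk)
      have hdle : tt k - tt J.castSucc ≤ L := by
        rw [hLdef]
        have := httm.monotone (Fin.le_last k)
        linarith
      have h1 : θ * (tt k - tt J.castSucc) ≤ θ₁ * L := by
        apply mul_le_mul (min_le_left _ _) hdle ?_ hθ₁pos.le
        have := httm.monotone hk.le
        linarith
      linarith
    · push_neg at hk
      have hcongr : Gpart n tt c k = Gpart n tt b k :=
        Gpart_congr tt (fun i hi => hcb i
          (fun hJi => absurd (Fin.castSucc_lt_castSucc_iff.1 (lt_of_lt_of_le hi hk))
            (not_lt.2 hJi)))
      rw [hcongr]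
      exact hnode k
  have hJlc : J ≤ lc := by
    rw [Fin.le_def]
    have := J.2
    simp only [hlc]
    omega
  have hlt : Phisum φ n tt a c < Phisum φ n tt a b := by
    refine Finset.sum_lt_sum (fun i _ => ?_) ⟨lc, Finset.mem_univ lc, ?_⟩
    · by_cases hJi : J ≤ i
      · have hcival : c i = b i + θ := by simp only [hcdef, if_pos hJi]
        have h := ratio_strict_anti hφ hsc (hapos i) (hbpos i)
          (lt_add_of_pos_right _ hθpos : b i < b i + θ)
        rw [hcival]
        have hΔ : (0:ℝ) ≤ tt i.succ - tt i.castSucc := by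
          have := httm ((Fin.castSucc_lt_succ (i := i)))
          linarith
        exact mul_le_mul_of_nonneg_right h.le hΔ
      · rw [hcb i hJi]
    · have hcival : c lc = b lc + θ := by simp only [hcdef, if_pos hJlc]
      have h := ratio_strict_anti hφ hsc (hapos lc) (hbpos lc)
        (lt_add_of_pos_right _ hθpos : b lc < b lc + θ)
      rw [hcival]
      have hΔ : (0:ℝ) < tt lc.succ - tt lc.castSucc := by
        have := httm ((Fin.castSucc_lt_succ (i := lc)))
        linarith
      exact mul_lt_mul_of_pos_right h hΔ
  exact absurd (main_ineq hI hφ hw htt0 httm httI ha hapos hmin hbpos hcanti hcpos hcnode)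
    (not_le.2 hlt)


/-! ### junction lemmas -/

lemma junction_left {I : Set ℝ} {w : ℝ → ℝ} {b : Fin n → ℝ}
    (hI : OLDomain I) (hw : IsWeight I w) (htt0 : tt 0 = 0) (httm : StrictMono tt)
    (httI : tt (Fin.last n) ∈ I) (hb : Antitone b)
    (hnode : ∀ k : Fin (n+1), Gpart n tt b k ≤ ∫ s in Ioo (0:ℝ) (tt k), w s)
    {i₀ i₁ : Fin n} (hadj : i₀.succ = i₁.castSucc)
    (hT : Gpart n tt b i₁.castSucc = ∫ s in Ioo (0:ℝ) (tt i₁.castSucc), w s)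
    (hS : Gpart n tt b i₁.succ < ∫ s in Ioo (0:ℝ) (tt i₁.succ), w s) :
    b i₁ < b i₀ := by
  by_contra hcon
  push_neg at hcon
  have hi01 : i₀ < i₁ := Fin.succ_le_castSucc_iff.1 (le_of_eq hadj)
  have heq : b i₀ = b i₁ := le_antisymm hcon (hb hi01.le)
  have hG1 := Gpart_succ tt b i₀
  have hG2 := Gpart_succ tt b i₁
  rw [hadj] at hG1
  have hW1 := Wk_split hI hw htt0 httm httI
    (show i₀.castSucc ≤ i₁.castSucc from (Fin.castSucc_lt_castSucc_iff.2 hi01).le)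
  have hW2 := Wk_split hI hw htt0 httm httI (Fin.castSucc_le_succ i₁)
  have hp1I : tt i₁.castSucc ∈ I := tt_mem hI htt0 httm httI _
  have hwl := le_integral_w hI hw (tt_nonneg htt0 httm i₀.castSucc) hp1I
    (httm.monotone (Fin.castSucc_lt_castSucc_iff.2 hi01).le)
  have hwu := integral_w_le hI hw hp1I (tt_mem hI htt0 httm httI i₁.succ)
    (httm.monotone (Fin.castSucc_le_succ i₁))
  have hnode0 := hnode i₀.castSucc
  have hΔ0 : 0 < tt i₁.castSucc - tt i₀.castSucc := by
    rw [← hadj]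
    have := httm ((Fin.castSucc_lt_succ (i := i₀)))
    linarith
  have hΔ1 : 0 < tt i₁.succ - tt i₁.castSucc := by
    have := httm ((Fin.castSucc_lt_succ (i := i₁)))
    linarith
  -- w(t_p) ≤ β  and  β < w(t_p)
  have h1 : w (tt i₁.castSucc) ≤ b i₁ := by
    have hm : w (tt i₁.castSucc) * (tt i₁.castSucc - tt i₀.castSucc)
        ≤ b i₁ * (tt i₁.castSucc - tt i₀.castSucc) := by
      nlinarith [heq]
    exact le_of_mul_le_mul_right hm hΔ0
  have h2 : b i₁ < w (tt i₁.castSucc) := by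
    have hm : b i₁ * (tt i₁.succ - tt i₁.castSucc)
        < w (tt i₁.castSucc) * (tt i₁.succ - tt i₁.castSucc) := by
      nlinarith
    exact lt_of_mul_lt_mul_right hm hΔ1.le
  linarith

lemma junction_right {I : Set ℝ} {w : ℝ → ℝ} {b : Fin n → ℝ}
    (hI : OLDomain I) (hw : IsWeight I w) (htt0 : tt 0 = 0) (httm : StrictMono tt)
    (httI : tt (Fin.last n) ∈ I) (hb : Antitone b)
    (hnode : ∀ k : Fin (n+1), Gpart n tt b k ≤ ∫ s in Ioo (0:ℝ) (tt k), w s)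
    {i₂ i₃ : Fin n} (hadj : i₂.succ = i₃.castSucc)
    (hS : Gpart n tt b i₂.castSucc < ∫ s in Ioo (0:ℝ) (tt i₂.castSucc), w s)
    (hT : Gpart n tt b i₂.succ = ∫ s in Ioo (0:ℝ) (tt i₂.succ), w s) :
    b i₃ < b i₂ := by
  by_contra hcon
  push_neg at hcon
  have hi23 : i₂ < i₃ := Fin.succ_le_castSucc_iff.1 (le_of_eq hadj)
  have heq : b i₂ = b i₃ := le_antisymm hcon (hb hi23.le)
  have hG2 := Gpart_succ tt b i₂
  have hG3 := Gpart_succ tt b i₃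
  rw [hadj] at hG2 hT
  have hW1 := Wk_split hI hw htt0 httm httI (Fin.castSucc_le_succ i₂)
  have hW2 := Wk_split hI hw htt0 httm httI (Fin.castSucc_le_succ i₃)
  rw [hadj] at hW1
  have hqI : tt i₃.castSucc ∈ I := tt_mem hI htt0 httm httI _
  have hwl := le_integral_w hI hw (tt_nonneg htt0 httm i₂.castSucc) hqI
    (httm.monotone (hadj ▸ Fin.castSucc_le_succ i₂))
  have hwu := integral_w_le hI hw hqI (tt_mem hI htt0 httm httI i₃.succ)
    (httm.monotone (Fin.castSucc_le_succ i₃))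
  have hnode3 := hnode i₃.succ
  have hΔ2 : 0 < tt i₃.castSucc - tt i₂.castSucc := by
    rw [← hadj]
    have := httm ((Fin.castSucc_lt_succ (i := i₂)))
    linarith
  have hΔ3 : 0 < tt i₃.succ - tt i₃.castSucc := by
    have := httm ((Fin.castSucc_lt_succ (i := i₃)))
    linarith
  have h1 : w (tt i₃.castSucc) < b i₂ := by
    have hm : w (tt i₃.castSucc) * (tt i₃.castSucc - tt i₂.castSucc)
        < b i₂ * (tt i₃.castSucc - tt i₂.castSucc) := by
      nlinarith
    exact lt_of_mul_lt_mul_right hm hΔ2.le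
  have h2 : b i₂ ≤ w (tt i₃.castSucc) := by
    have hm : b i₂ * (tt i₃.succ - tt i₃.castSucc)
        ≤ w (tt i₃.castSucc) * (tt i₃.succ - tt i₃.castSucc) := by
      nlinarith [heq]
    exact le_of_mul_le_mul_right hm hΔ3
  linarith

lemma Gpart_sub (tt : Fin (n+1) → ℝ) (c d : Fin n → ℝ) (k : Fin (n+1)) :
    Gpart n tt c k - Gpart n tt d k
      = ∑ i ∈ Finset.univ.filter (fun i : Fin n => i.castSucc < k),
          (c i - d i) * (tt i.succ - tt i.castSucc) := by
  rw [Gpart, Gpart, ← Finset.sum_sub_distrib]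
  exact Finset.sum_congr rfl fun i _ => by ring


/-! ### Claim B : proportionality on blocks between consecutive tight nodes -/

set_option maxHeartbeats 2000000 in
lemma block_prop {I : Set ℝ} {w φ : ℝ → ℝ} {a b : Fin n → ℝ}
    (hI : OLDomain I) (hφ : OrliczOn φ) (hsc : StrictConvexOn ℝ (Ici 0) φ)
    (hw : IsWeight I w) (htt0 : tt 0 = 0) (httm : StrictMono tt)
    (httI : tt (Fin.last n) ∈ I) (ha : StrictAnti a) (hapos : ∀ i, 0 < a i)
    (hb : Antitone b) (hbpos : ∀ i, 0 < b i)
    (hnode : ∀ k : Fin (n+1), Gpart n tt b k ≤ ∫ s in Ioo (0:ℝ) (tt k), w s)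
    (hmin : (∫⁻ t in I, phiRatio φ (stepFun n tt a t) (stepFun n tt b t))
        = Pmod I φ w (stepFun n tt a))
    {p q : Fin (n+1)} (hpq : p < q)
    (hTp : Gpart n tt b p = ∫ s in Ioo (0:ℝ) (tt p), w s)
    (hTq : Gpart n tt b q = ∫ s in Ioo (0:ℝ) (tt q), w s)
    (hslk : ∀ k : Fin (n+1), p < k → k < q →
      Gpart n tt b k < ∫ s in Ioo (0:ℝ) (tt k), w s) :
    ∀ i j : Fin n, p ≤ i.castSucc → i.castSucc < q → p ≤ j.castSucc → j.castSucc < q →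
      a i * b j = a j * b i := by
  classical
  by_contra hcon
  push_neg at hcon
  obtain ⟨iS, jS, hiP1, hiP2, hjP1, hjP2, hne⟩ := hcon
  set C : Finset (Fin n) :=
    Finset.univ.filter (fun i => p ≤ i.castSucc ∧ i.castSucc < q) with hC
  have hmemC : ∀ i : Fin n, i ∈ C ↔ p ≤ i.castSucc ∧ i.castSucc < q := by
    intro i
    simp [hC]
  have hiC : iS ∈ C := (hmemC _).2 ⟨hiP1, hiP2⟩
  have hjC : jS ∈ C := (hmemC _).2 ⟨hjP1, hjP2⟩
  set Δ : Fin n → ℝ := fun i => tt i.succ - tt i.castSucc with hΔdef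
  have hΔpos : ∀ i, 0 < Δ i := by
    intro i
    have := httm ((Fin.castSucc_lt_succ (i := i)))
    simp only [hΔdef]
    linarith
  set A := ∑ i ∈ C, a i * Δ i with hA
  set B := ∑ i ∈ C, b i * Δ i with hB
  have hApos : 0 < A := Finset.sum_pos (fun i _ => mul_pos (hapos i) (hΔpos i)) ⟨iS, hiC⟩
  have hBpos : 0 < B := Finset.sum_pos (fun i _ => mul_pos (hbpos i) (hΔpos i)) ⟨iS, hiC⟩
  set lam := B / A with hlam
  have hlampos : 0 < lam := div_pos hBpos hApos
  have hlamA : lam * A = B := div_mul_cancel₀ _ (ne_of_gt hApos)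
  -- distinguished cells
  have hij : iS ≠ jS := by
    rintro rfl
    exact hne rfl
  have hpltn : (p:ℕ) < n := by
    have h1 : (p:ℕ) < (q:ℕ) := hpq
    have h2 := jS.2
    have h3 : (jS.castSucc : ℕ) = (jS : ℕ) := rfl
    omega
  have hq1 : 0 < (q:ℕ) := by
    have h1 : (p:ℕ) < (q:ℕ) := hpq
    omega
  have hqlen : (q:ℕ) ≤ n := by
    have := q.2
    omega
  have hgap2 : (p:ℕ) + 1 < (q:ℕ) := by
    have h1 : (p:ℕ) ≤ (iS:ℕ) := hiP1
    have h2 : (iS:ℕ) < (q:ℕ) := hiP2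
    have h3 : (p:ℕ) ≤ (jS:ℕ) := hjP1
    have h4 : (jS:ℕ) < (q:ℕ) := hjP2
    have h5 : (iS:ℕ) ≠ (jS:ℕ) := fun h => hij (Fin.ext h)
    omega
  set i₁ : Fin n := ⟨(p:ℕ), hpltn⟩ with hi₁def
  have hi₁cs : i₁.castSucc = p := by
    apply Fin.ext
    simp [hi₁def]
  set i₂ : Fin n := ⟨(q:ℕ)-1, by omega⟩ with hi₂def
  have hi₂succ : i₂.succ = q := by
    apply Fin.ext
    simp only [Fin.val_succ, hi₂def]
    omega
  have hi₁C : i₁ ∈ C := by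
    rw [hmemC, hi₁cs]
    exact ⟨le_rfl, hpq⟩
  have hi₂C : i₂ ∈ C := by
    rw [hmemC]
    constructor
    · rw [Fin.le_def]
      simp only [Fin.coe_castSucc, hi₂def]
      omega
    · rw [Fin.lt_def]
      simp only [Fin.coe_castSucc, hi₂def]
      omega
  have hle_i₂ : ∀ i ∈ C, i ≤ i₂ := by
    intro i hi
    rw [hmemC] at hi
    rw [Fin.le_def]
    have h2 : (i.castSucc : ℕ) < (q:ℕ) := hi.2
    simp only [hi₂def]
    have h3 : (i.castSucc : ℕ) = (i : ℕ) := rfl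
    omega
  have hi₁_le : ∀ i ∈ C, i₁ ≤ i := by
    intro i hi
    rw [hmemC] at hi
    rw [Fin.le_def]
    have h2 : (p : ℕ) ≤ (i.castSucc : ℕ) := hi.1
    simp only [hi₁def]
    have h3 : (i.castSucc : ℕ) = (i : ℕ) := rfl
    omega
  -- slack at the node i₁.succ (interior)
  have hi₁succ_int : p < i₁.succ ∧ i₁.succ < q := by
    constructor
    · rw [Fin.lt_def]
      simp [hi₁def]
    · rw [Fin.lt_def]
      simp only [Fin.val_succ, hi₁def]
      omega
  -- junction gaps
  have hgapL : ∀ h0 : 0 < (p:ℕ), b i₁ < b ⟨(p:ℕ)-1, by omega⟩ := by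
    intro h0
    refine junction_left hI hw htt0 httm httI hb hnode
      (i₀ := ⟨(p:ℕ)-1, by omega⟩) (i₁ := i₁) ?_ ?_ ?_
    · apply Fin.ext
      simp only [Fin.val_succ, Fin.coe_castSucc, hi₁def]
      omega
    · rw [hi₁cs]
      exact hTp
    · exact hslk i₁.succ hi₁succ_int.1 hi₁succ_int.2
  have hgapR : ∀ hqn : (q:ℕ) < n, b ⟨(q:ℕ), hqn⟩ < b i₂ := by
    intro hqn
    refine junction_right hI hw htt0 httm httI hb hnode
      (i₂ := i₂) (i₃ := ⟨(q:ℕ), hqn⟩) ?_ ?_ ?_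
    · apply Fin.ext
      simp only [Fin.val_succ, Fin.coe_castSucc, hi₂def]
      omega
    · refine hslk i₂.castSucc ?_ ?_
      · rw [Fin.lt_def]
        simp only [Fin.coe_castSucc, hi₂def]
        omega
      · rw [Fin.lt_def]
        simp only [Fin.coe_castSucc, hi₂def]
        omega
    · rw [hi₂succ]
      exact hTq
  -- size of the perturbation
  set M := ∑ i ∈ C, |lam * a i - b i| * Δ i with hM
  have hM0 : 0 ≤ M :=
    Finset.sum_nonneg fun i _ => mul_nonneg (abs_nonneg _) (hΔpos i).le
  set Tin : Finset (Fin (n+1)) := Finset.univ.filter (fun k => p < k ∧ k < q) with hTin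
  have hTinne : Tin.Nonempty := by
    refine ⟨i₁.succ, ?_⟩
    simp only [hTin, Finset.mem_filter, Finset.mem_univ, true_and]
    exact hi₁succ_int
  set ε := Tin.inf' hTinne
    (fun k => (∫ s in Ioo (0:ℝ) (tt k), w s) - Gpart n tt b k) with hε
  have hεpos : 0 < ε := by
    refine (Finset.lt_inf'_iff _).2 fun k hk => ?_
    simp only [hTin, Finset.mem_filter, Finset.mem_univ, true_and] at hk
    exact sub_pos.2 (hslk k hk.1 hk.2)
  set θL : ℝ := if h : 0 < (p:ℕ) then
    (b ⟨(p:ℕ)-1, by omega⟩ - b i₁) / (|lam * a i₁ - b i₁| + 1) else 1 with hθL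
  have hθLpos : 0 < θL := by
    rw [hθL]
    split
    · rename_i h
      exact div_pos (sub_pos.2 (hgapL h)) (by positivity)
    · exact one_pos
  set θR : ℝ := if h : (q:ℕ) < n then
    (b i₂ - b ⟨(q:ℕ), h⟩) / (|lam * a i₂ - b i₂| + 1) else 1 with hθR
  have hθRpos : 0 < θR := by
    rw [hθR]
    split
    · rename_i h
      exact div_pos (sub_pos.2 (hgapR h)) (by positivity)
    · exact one_pos
  set θ := min (min (ε / (M + 1)) 1) (min θL θR) with hθdef
  have hθpos : 0 < θ :=
    lt_min (lt_min (div_pos hεpos (by positivity)) one_pos) (lt_min hθLpos hθRpos)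
  have hθ1 : θ ≤ 1 := le_trans (min_le_left _ _) (min_le_right _ _)
  -- the competitor
  set c : Fin n → ℝ := fun i =>
    if p ≤ i.castSucc ∧ i.castSucc < q then (1-θ)*b i + θ*(lam * a i) else b i with hc
  have hcC : ∀ i ∈ C, c i = (1-θ)*b i + θ*(lam*a i) := by
    intro i hi
    rw [hmemC] at hi
    simp only [hc, if_pos hi]
  have hcN : ∀ i, i ∉ C → c i = b i := by
    intro i hi
    rw [hmemC] at hi
    simp only [hc, if_neg hi]
  have hcpos : ∀ i, 0 < c i := by
    intro i
    by_cases hi : i ∈ C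
    · rw [hcC i hi]
      have h1 := hbpos i
      have h2 := mul_pos hlampos (hapos i)
      nlinarith
    · rw [hcN i hi]
      exact hbpos i
  have hcsub : ∀ i ∈ C, c i - b i = θ * (lam * a i - b i) := by
    intro i hi
    rw [hcC i hi]
    ring
  have hblockmono : ∀ i j : Fin n, i ∈ C → j ∈ C → i ≤ j → c j ≤ c i := by
    intro i j hi hj hijle
    rw [hcC i hi, hcC j hj]
    have h1 : b j ≤ b i := hb hijle
    have h2 : a j ≤ a i := ha.antitone hijle
    have h3 : (0:ℝ) ≤ 1 - θ := by linarith
    nlinarith [mul_le_mul_of_nonneg_left h2 hlampos.le]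
  -- bounds at the two boundary cells
  have hcθbound : ∀ i ∈ C, |c i - b i| ≤ θ * |lam * a i - b i| := by
    intro i hi
    rw [hcsub i hi, abs_mul, abs_of_pos hθpos]
  have hcanti : Antitone c := by
    intro i j hijle
    by_cases hiC' : i ∈ C <;> by_cases hjC' : j ∈ C
    · exact hblockmono i j hiC' hjC' hijle
    · -- i ∈ C, j ∉ C ⇒ j is to the right of the block
      rw [hcN j hjC']
      rw [hmemC] at hiC' hjC'
      have hqj : (q:ℕ) ≤ (j:ℕ) := by
        by_contra hcon'
        push_neg at hcon'
        refine hjC' ⟨?_, ?_⟩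
        · calc p ≤ i.castSucc := hiC'.1
            _ ≤ j.castSucc := by
              rw [Fin.le_def]
              exact hijle
        · rw [Fin.lt_def]
          exact hcon'
      have hqn : (q:ℕ) < n := lt_of_le_of_lt hqj j.2
      have hbj : b j ≤ b ⟨(q:ℕ), hqn⟩ := hb (Fin.le_def.2 (by simp; omega))
      have hc2 : b ⟨(q:ℕ), hqn⟩ ≤ c i₂ := by
        have hθR' : θ ≤ θR := le_trans (min_le_right _ _) (min_le_right _ _)
        have hbnd := hcθbound i₂ hi₂C
        have habs : c i₂ - b i₂ ≥ -(θ * |lam * a i₂ - b i₂|) := by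
          have := abs_le.1 (hbnd)
          linarith [this.1]
        have hθabs : θ * |lam * a i₂ - b i₂| ≤ θR * (|lam * a i₂ - b i₂| + 1) := by
          apply mul_le_mul hθR' (by linarith [abs_nonneg (lam * a i₂ - b i₂)])
            (abs_nonneg _) hθRpos.le
        have hθRval : θR * (|lam * a i₂ - b i₂| + 1) = b i₂ - b ⟨(q:ℕ), hqn⟩ := by
          rw [hθR, dif_pos hqn]
          field_simp
        linarith
      calc b j ≤ b ⟨(q:ℕ), hqn⟩ := hbj
        _ ≤ c i₂ := hc2
        _ ≤ c i := hblockmono i i₂ ((hmemC i).2 hiC') hi₂C (hle_i₂ i ((hmemC i).2 hiC'))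
    · -- i ∉ C, j ∈ C ⇒ i is to the left of the block
      rw [hcN i hiC']
      rw [hmemC] at hiC' hjC'
      have hip : (i:ℕ) < (p:ℕ) := by
        by_contra hcon'
        push_neg at hcon'
        refine hiC' ⟨Fin.le_def.2 hcon', ?_⟩
        · calc i.castSucc ≤ j.castSucc := by rw [Fin.le_def]; exact hijle
            _ < q := hjC'.2
      have hp0 : 0 < (p:ℕ) := by omega
      have hbi : b ⟨(p:ℕ)-1, by omega⟩ ≤ b i := hb (Fin.le_def.2 (by simp; omega))
      have hc1 : c i₁ ≤ b ⟨(p:ℕ)-1, by omega⟩ := by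
        have hθL' : θ ≤ θL := le_trans (min_le_right _ _) (min_le_left _ _)
        have hbnd := hcθbound i₁ hi₁C
        have habs : c i₁ - b i₁ ≤ θ * |lam * a i₁ - b i₁| := by
          have := abs_le.1 hbnd
          linarith [this.2]
        have hθabs : θ * |lam * a i₁ - b i₁| ≤ θL * (|lam * a i₁ - b i₁| + 1) := by
          apply mul_le_mul hθL' (by linarith [abs_nonneg (lam * a i₁ - b i₁)])
            (abs_nonneg _) hθLpos.le
        have hθLval : θL * (|lam * a i₁ - b i₁| + 1) = b ⟨(p:ℕ)-1, by omega⟩ - b i₁ := by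
          rw [hθL, dif_pos hp0]
          field_simp
        linarith
      calc c j ≤ c i₁ := hblockmono i₁ j hi₁C ((hmemC j).2 hjC') (hi₁_le j ((hmemC j).2 hjC'))
        _ ≤ b ⟨(p:ℕ)-1, by omega⟩ := hc1
        _ ≤ b i := hbi
    · rw [hcN i hiC', hcN j hjC']
      exact hb hijle
  -- node inequalities for the competitor
  have hsubk : ∀ k : Fin (n+1), Gpart n tt c k - Gpart n tt b k
      = ∑ i ∈ (Finset.univ.filter (fun i : Fin n => i.castSucc < k)).filter
          (fun i => p ≤ i.castSucc ∧ i.castSucc < q),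
          θ * (lam * a i - b i) * Δ i := by
    intro k
    rw [Gpart_sub]
    conv_rhs => rw [Finset.sum_filter]
    refine Finset.sum_congr rfl fun i _ => ?_
    by_cases hPi : p ≤ i.castSucc ∧ i.castSucc < q
    · rw [if_pos hPi, hcsub i ((hmemC i).2 hPi)]
    · rw [if_neg hPi, hcN i (fun hmem => hPi ((hmemC i).1 hmem))]
      ring
  have hcnode : ∀ k : Fin (n+1), Gpart n tt c k ≤ ∫ s in Ioo (0:ℝ) (tt k), w s := by
    intro k
    rcases le_or_gt k p with hkp | hkp
    · have hempty : (Finset.univ.filter (fun i : Fin n => i.castSucc < k)).filter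
          (fun i => p ≤ i.castSucc ∧ i.castSucc < q) = ∅ := by
        refine Finset.filter_false_of_mem fun i hi => ?_
        rw [Finset.mem_filter] at hi
        rintro ⟨h1, -⟩
        exact absurd (lt_of_lt_of_le hi.2 hkp) (not_lt.2 h1)
      have := hsubk k
      rw [hempty, Finset.sum_empty, sub_eq_zero] at this
      rw [this]
      exact hnode k
    rcases lt_or_ge k q with hkq | hkq
    · -- interior node
      have hksub : (Finset.univ.filter (fun i : Fin n => i.castSucc < k)).filter
          (fun i => p ≤ i.castSucc ∧ i.castSucc < q) ⊆ C := by
        intro i hi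
        rw [Finset.mem_filter] at hi
        exact (hmemC i).2 hi.2
      have habs : |Gpart n tt c k - Gpart n tt b k| ≤ θ * M := by
        rw [hsubk k]
        calc |∑ i ∈ _, θ * (lam * a i - b i) * Δ i|
            ≤ ∑ i ∈ (Finset.univ.filter (fun i : Fin n => i.castSucc < k)).filter
                (fun i => p ≤ i.castSucc ∧ i.castSucc < q),
                |θ * (lam * a i - b i) * Δ i| := Finset.abs_sum_le_sum_abs _ _
          _ ≤ ∑ i ∈ C, |θ * (lam * a i - b i) * Δ i| := by
              refine Finset.sum_le_sum_of_subset_of_nonneg hksub fun i _ _ => abs_nonneg _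
          _ = θ * M := by
              rw [hM, Finset.mul_sum]
              refine Finset.sum_congr rfl fun i _ => ?_
              rw [abs_mul, abs_mul, abs_of_pos hθpos, abs_of_pos (hΔpos i)]
              ring
      have hθM : θ * M ≤ ε := by
        have h1 : θ ≤ ε / (M+1) := le_trans (min_le_left _ _) (min_le_left _ _)
        have h2 : θ * M ≤ (ε / (M+1)) * M := mul_le_mul_of_nonneg_right h1 hM0
        have h3 : (ε / (M+1)) * M ≤ ε := by
          rw [div_mul_eq_mul_div, div_le_iff₀ (by positivity)]
          nlinarith
        linarith
      have hεk : ε ≤ (∫ s in Ioo (0:ℝ) (tt k), w s) - Gpart n tt b k := by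
        refine Finset.inf'_le _ ?_
        simp only [hTin, Finset.mem_filter, Finset.mem_univ, true_and]
        exact ⟨hkp, hkq⟩
      have := (abs_le.1 habs).2
      linarith
    · -- k ≥ q : mass is preserved
      have hfull : (Finset.univ.filter (fun i : Fin n => i.castSucc < k)).filter
          (fun i => p ≤ i.castSucc ∧ i.castSucc < q) = C := by
        ext i
        simp only [Finset.mem_filter, Finset.mem_univ, true_and, hmemC]
        constructor
        · rintro ⟨-, h⟩
          exact h
        · rintro ⟨h1, h2⟩
          exact ⟨lt_of_lt_of_le h2 hkq, h1, h2⟩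
      have hzero : ∑ i ∈ C, θ * (lam * a i - b i) * Δ i = θ * (lam * A - B) := by
        conv_rhs => rw [hA, hB, mul_sub, Finset.mul_sum, Finset.mul_sum, Finset.mul_sum,
          ← Finset.sum_sub_distrib]
        refine Finset.sum_congr rfl fun i _ => ?_
        ring
      have := hsubk k
      rw [hfull, hzero, hlamA, sub_self, mul_zero, sub_eq_zero] at this
      rw [this]
      exact hnode k
  -- strict decrease of the value
  have hsum1 : ∑ i ∈ C, b i * Δ i / B = 1 := by
    rw [← Finset.sum_div, ← hB, div_self hBpos.ne']
  have hmean : ∑ i ∈ C, (b i * Δ i / B) • (a i / b i) = A / B := by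
    rw [hA, Finset.sum_div]
    refine Finset.sum_congr rfl fun i _ => ?_
    rw [smul_eq_mul]
    have h1 : b i ≠ 0 := (hbpos i).ne'
    have h2 : B ≠ 0 := hBpos.ne'
    field_simp
  have hxne : a iS / b iS ≠ a jS / b jS := fun h =>
    hne ((div_eq_div_iff (hbpos iS).ne' (hbpos jS).ne').1 h)
  have hjen := hsc.map_sum_lt (t := C) (w := fun i => b i * Δ i / B)
    (p := fun i => a i / b i)
    (fun i _ => div_pos (mul_pos (hbpos i) (hΔpos i)) hBpos) hsum1
    (fun i _ => div_nonneg (hapos i).le (hbpos i).le)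
    ⟨iS, hiC, jS, hjC, hxne⟩
  rw [hmean] at hjen
  have hjen' : B * φ (A/B) < ∑ i ∈ C, φ (a i / b i) * b i * Δ i := by
    have h2 := mul_lt_mul_of_pos_left hjen hBpos
    rw [Finset.mul_sum] at h2
    calc B * φ (A/B) < ∑ i ∈ C, B * ((b i * Δ i / B) • φ (a i / b i)) := h2
      _ = ∑ i ∈ C, φ (a i / b i) * b i * Δ i := by
          refine Finset.sum_congr rfl fun i _ => ?_
          rw [smul_eq_mul]
          field_simp
  have hkey : ∀ i ∈ C, φ (a i / c i) * c i * Δ i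
      ≤ (1-θ) * (φ (a i / b i) * b i * Δ i)
        + θ * (φ (a i / (lam * a i)) * (lam * a i) * Δ i) := by
    intro i hi
    have hpersp := perspective hφ (hapos i).le (hbpos i) (mul_pos hlampos (hapos i))
      hθpos.le hθ1
    rw [← hcC i hi] at hpersp
    calc φ (a i / c i) * c i * Δ i
        ≤ ((1-θ) * (φ (a i / b i) * b i) + θ * (φ (a i / (lam * a i)) * (lam * a i))) * Δ i :=
          mul_le_mul_of_nonneg_right hpersp (hΔpos i).le
      _ = (1-θ) * (φ (a i / b i) * b i * Δ i)
          + θ * (φ (a i / (lam * a i)) * (lam * a i) * Δ i) := by ring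
  have hlamterm : ∑ i ∈ C, φ (a i / (lam * a i)) * (lam * a i) * Δ i = B * φ (A/B) := by
    have hpt : ∀ i ∈ C, φ (a i / (lam * a i)) * (lam * a i) * Δ i
        = φ (A/B) * lam * (a i * Δ i) := by
      intro i hi
      have harg : a i / (lam * a i) = A / B := by
        rw [hlam]
        field_simp
        exact div_self (hapos i).ne'
      rw [harg]
      ring
    rw [Finset.sum_congr rfl hpt, ← Finset.mul_sum, ← hA]
    have : φ (A/B) * lam * A = φ (A/B) * B := by
      rw [mul_assoc, hlamA]
    rw [this]
    ring
  have hCsum_lt : ∑ i ∈ C, φ (a i / c i) * c i * Δ i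
      < ∑ i ∈ C, φ (a i / b i) * b i * Δ i := by
    have h1 : ∑ i ∈ C, φ (a i / c i) * c i * Δ i
        ≤ (1-θ) * (∑ i ∈ C, φ (a i / b i) * b i * Δ i)
          + θ * (∑ i ∈ C, φ (a i / (lam * a i)) * (lam * a i) * Δ i) := by
      rw [Finset.mul_sum, Finset.mul_sum, ← Finset.sum_add_distrib]
      exact Finset.sum_le_sum hkey
    rw [hlamterm] at h1
    nlinarith
  have hfinal : Phisum φ n tt a c < Phisum φ n tt a b := by
    rw [Phisum, Phisum, ← Finset.sum_filter_add_sum_filter_not Finset.univ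
      (fun i => p ≤ i.castSucc ∧ i.castSucc < q)
      (fun i => φ (a i / c i) * c i * (tt i.succ - tt i.castSucc)),
      ← Finset.sum_filter_add_sum_filter_not Finset.univ
      (fun i => p ≤ i.castSucc ∧ i.castSucc < q)
      (fun i => φ (a i / b i) * b i * (tt i.succ - tt i.castSucc))]
    have hcompl : ∑ i ∈ Finset.univ.filter
        (fun i : Fin n => ¬(p ≤ i.castSucc ∧ i.castSucc < q)),
        φ (a i / c i) * c i * (tt i.succ - tt i.castSucc)
        = ∑ i ∈ Finset.univ.filter
        (fun i : Fin n => ¬(p ≤ i.castSucc ∧ i.castSucc < q)),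
        φ (a i / b i) * b i * (tt i.succ - tt i.castSucc) := by
      refine Finset.sum_congr rfl fun i hi => ?_
      rw [Finset.mem_filter] at hi
      rw [hcN i (fun hmem => hi.2 ((hmemC i).1 hmem))]
    rw [hcompl]
    have := hCsum_lt
    simp only [hC] at this
    simp only [hΔdef] at this
    linarith
  exact absurd (main_ineq hI hφ hw htt0 httm httI ha hapos hmin hbpos hcanti hcpos hcnode)
    (not_le.2 hfinal)

end OLAux

open OLAux in
set_option maxHeartbeats 1000000 in
theorem statement13 (I : Set ℝ) (hI : OLDomain I) (φ w : ℝ → ℝ)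
    (hφ : NFun φ) (hsc : StrictConvexOn ℝ (Ici 0) φ) (hw : IsWeight I w)
    (n : ℕ) (hn : 0 < n) (tt : Fin (n+1) → ℝ) (a : Fin n → ℝ)
    (htt0 : tt 0 = 0) (httm : StrictMono tt) (httI : tt (Fin.last n) ∈ I)
    (ha : StrictAnti a) (hapos : ∀ i, 0 < a i)
    (b : Fin n → ℝ) (hb : Antitone b) (hbpos : ∀ i, 0 < b i)
    (hsub : Submaj I w (stepFun n tt b))
    (hmin : (∫⁻ t in I, phiRatio φ (stepFun n tt a t) (stepFun n tt b t))
        = Pmod I φ w (stepFun n tt a)) :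
    ∃ m : ℕ, m ≤ n ∧ ∃ idx : Fin (m+1) → Fin (n+1), StrictMono idx ∧
      idx 0 = 0 ∧ idx (Fin.last m) = Fin.last n ∧
      ∃ lam : Fin m → ℝ, (∀ j, 0 < lam j) ∧
        (∀ s : ℝ, stepFun n tt b s =
          ∑ j : Fin m, if tt (idx j.castSucc) ≤ s ∧ s < tt (idx j.succ)
            then lam j * stepFun n tt a s else 0) ∧
        ∀ j : Fin (m+1), (∫ s in Ioo (0:ℝ) (tt (idx j)), stepFun n tt b s)
            = ∫ s in Ioo (0:ℝ) (tt (idx j)), w s := by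
  classical
  have hφO : OrliczOn φ := hφ.1
  have hnode := nodes_of_submaj hI hw htt0 httm httI hb hbpos hsub
  have hlast := tight_last hI hφO hsc hw hn htt0 httm httI ha hapos hb hbpos hsub hmin
  set T : Finset (Fin (n+1)) := Finset.univ.filter
    (fun k => Gpart n tt b k = ∫ s in Ioo (0:ℝ) (tt k), w s) with hT
  have hmemT : ∀ k, k ∈ T ↔ Gpart n tt b k = ∫ s in Ioo (0:ℝ) (tt k), w s := by
    intro k
    simp [hT]
  have h0T : (0 : Fin (n+1)) ∈ T := by
    rw [hmemT, Gpart_zero, htt0]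
    simp
  have hlastT : Fin.last n ∈ T := (hmemT _).2 hlast
  have hTcardpos : 0 < T.card := Finset.card_pos.2 ⟨0, h0T⟩
  set m := T.card - 1 with hm
  have hTcard : T.card = m + 1 := by omega
  have hmn : m ≤ n := by
    have h1 : T.card ≤ n + 1 := by
      have := Finset.card_le_card (Finset.subset_univ T)
      simpa using this
    omega
  set idx : Fin (m+1) → Fin (n+1) := fun j => T.orderEmbOfFin hTcard j with hidx
  have hidx0 : idx 0 = 0 := by
    have h := Finset.orderEmbOfFin_zero hTcard (Nat.succ_pos m)
    have h0 : (0 : Fin (m+1)) = ⟨0, Nat.succ_pos m⟩ := rfl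
    show T.orderEmbOfFin hTcard 0 = 0
    rw [h0, h]
    exact le_antisymm (Finset.min'_le T 0 h0T) (Fin.zero_le _)
  have hidxlast : idx (Fin.last m) = Fin.last n := by
    have h := Finset.orderEmbOfFin_last hTcard (Nat.succ_pos m)
    have h0 : (Fin.last m) = ⟨m + 1 - 1, Nat.sub_lt (Nat.succ_pos m) Nat.one_pos⟩ := rfl
    show T.orderEmbOfFin hTcard (Fin.last m) = Fin.last n
    rw [h0, h]
    exact le_antisymm (Fin.le_last _) (Finset.le_max' T _ hlastT)
  have hidxmem : ∀ j, idx j ∈ T := fun j => Finset.orderEmbOfFin_mem T hTcard j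
  have hidxmono : StrictMono idx := (T.orderEmbOfFin hTcard).strictMono
  have hidxlt : ∀ j : Fin m, idx j.castSucc < idx j.succ :=
    fun j => hidxmono ((Fin.castSucc_lt_succ (i := j)))
  have hidx_lt_n : ∀ j : Fin m, (idx j.castSucc : ℕ) < n := by
    intro j
    have h1 : idx j.castSucc < idx j.succ := hidxlt j
    have h2 : (idx j.succ : ℕ) ≤ n := by
      have := (idx j.succ).2
      omega
    have h3 : (idx j.castSucc : ℕ) < (idx j.succ : ℕ) := h1
    omega
  set lam : Fin m → ℝ := fun j =>
    b ⟨(idx j.castSucc : ℕ), hidx_lt_n j⟩ / a ⟨(idx j.castSucc : ℕ), hidx_lt_n j⟩ with hlam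
  have hlampos : ∀ j, 0 < lam j := fun j => div_pos (hbpos _) (hapos _)
  -- no tight node strictly inside a block
  have hgapT : ∀ j : Fin m, ∀ k : Fin (n+1), idx j.castSucc < k → k < idx j.succ →
      k ∉ T := by
    intro j k h1 h2 hkT
    have hrange : k ∈ Set.range (T.orderEmbOfFin hTcard) := by
      rw [Finset.range_orderEmbOfFin]
      exact hkT
    obtain ⟨j', hj'⟩ := hrange
    rw [hidx] at h1 h2
    rw [← hj'] at h1 h2
    have hj1 : j.castSucc < j' := hidxmono.lt_iff_lt.1 h1
    have hj2 : j' < j.succ := hidxmono.lt_iff_lt.1 h2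
    have := Fin.castSucc_lt_iff_succ_le.1 hj1
    exact absurd hj2 (not_lt.2 this)
  -- block proportionality
  have hblock : ∀ j : Fin m, ∀ i : Fin n, idx j.castSucc ≤ i.castSucc →
      i.castSucc < idx j.succ → b i = lam j * a i := by
    intro j i h1 h2
    have hprop := block_prop hI hφO hsc hw htt0 httm httI ha hapos hb hbpos hnode hmin
      (hidxlt j) ((hmemT _).1 (hidxmem j.castSucc)) ((hmemT _).1 (hidxmem j.succ))
      (fun k hk1 hk2 => lt_of_le_of_ne (hnode k) (fun h =>
        (hgapT j k hk1 hk2) ((hmemT k).2 h)))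
    set i₁ : Fin n := ⟨(idx j.castSucc : ℕ), hidx_lt_n j⟩ with hi₁
    have hi₁cs : i₁.castSucc = idx j.castSucc := by
      apply Fin.ext
      simp [hi₁]
    have hp := hprop i i₁ h1 h2 (le_of_eq hi₁cs.symm) (hi₁cs ▸ hidxlt j)
    -- hp : a i * b i₁ = a i₁ * b i
    have hgoal : b i = b i₁ / a i₁ * a i := by
      rw [div_mul_eq_mul_div, eq_comm, div_eq_iff (hapos i₁).ne']
      linarith [hp]
    exact hgoal
  -- representation
  refine ⟨m, hmn, idx, hidxmono, hidx0, hidxlast, lam, hlampos, ?_, ?_⟩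
  · intro s
    by_cases hs0 : 0 ≤ s
    · by_cases hslast : s < tt (Fin.last n)
      · obtain ⟨i, hi1, hi2⟩ := exists_cell httm (htt0 ▸ hs0) hslast
        -- find the block containing cell i
        set Jset : Finset (Fin (m+1)) :=
          Finset.univ.filter (fun j' => idx j' ≤ i.castSucc) with hJset
        have hJne : Jset.Nonempty := by
          refine ⟨0, ?_⟩
          simp only [hJset, Finset.mem_filter, Finset.mem_univ, true_and]
          rw [hidx0]
          exact Fin.zero_le _
        set jmax := Jset.max' hJne with hjmax
        have hjmaxmem : jmax ∈ Jset := Jset.max'_mem hJne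
        have hjmaxle : idx jmax ≤ i.castSucc := by
          have := hjmaxmem
          simpa only [hJset, Finset.mem_filter, Finset.mem_univ, true_and] using this
        have hjmaxne : jmax ≠ Fin.last m := by
          intro h
          rw [h, hidxlast] at hjmaxle
          exact absurd hjmaxle (not_le.2 (Fin.castSucc_lt_last i))
        set j : Fin m := jmax.castPred hjmaxne with hj
        have hjcs : j.castSucc = jmax := Fin.castSucc_castPred _ _
        have hble1 : idx j.castSucc ≤ i.castSucc := by rw [hjcs]; exact hjmaxle
        have hble2 : i.castSucc < idx j.succ := by
          by_contra hcon
          push_neg at hcon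
          have hmem : j.succ ∈ Jset := by
            simp only [hJset, Finset.mem_filter, Finset.mem_univ, true_and]
            exact hcon
          have hle := Jset.le_max' _ hmem
          rw [← hjmax] at hle
          have : jmax < j.succ := by
            rw [← hjcs]
            exact Fin.castSucc_lt_succ
          exact absurd hle (not_le.2 this)
        rw [stepFun_apply httm b hi1 hi2, Finset.sum_eq_single j]
        · rw [if_pos ⟨le_trans (httm.monotone hble1) hi1,
            lt_of_lt_of_le hi2 (httm.monotone (Fin.castSucc_lt_iff_succ_le.1 hble2))⟩,
            stepFun_apply httm a hi1 hi2]
          exact hblock j i hble1 hble2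
        · intro j' _ hj'
          rw [if_neg]
          rintro ⟨h1, h2⟩
          rcases lt_or_gt_of_ne hj' with hlt | hlt
          · have : idx j'.succ ≤ idx j.castSucc :=
              hidxmono.monotone (Fin.succ_le_castSucc_iff.2 hlt)
            have h3 := le_trans (httm.monotone this) (le_trans (httm.monotone hble1) hi1)
            linarith
          · have : idx j.succ ≤ idx j'.castSucc :=
              hidxmono.monotone (Fin.succ_le_castSucc_iff.2 hlt)
            have h4 : s < tt (idx j'.castSucc) := by
              have h5 := httm.monotone (le_trans (Fin.castSucc_lt_iff_succ_le.1 hble2) this)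
              calc s < tt i.succ := hi2
                _ ≤ tt (idx j'.castSucc) := h5
            linarith
        · intro h
          exact absurd (Finset.mem_univ j) h
      · push_neg at hslast
        rw [stepFun_zero_right httm b hslast]
        symm
        refine Finset.sum_eq_zero fun j _ => ?_
        rw [if_neg]
        rintro ⟨-, h2⟩
        have : tt (idx j.succ) ≤ tt (Fin.last n) := httm.monotone (Fin.le_last _)
        linarith
    · push_neg at hs0
      rw [stepFun_zero_left htt0 httm b hs0]
      symm
      refine Finset.sum_eq_zero fun j _ => ?_
      rw [if_neg]
      rintro ⟨h1, -⟩
      have : (0:ℝ) ≤ tt (idx j.castSucc) := tt_nonneg htt0 httm _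
      linarith
  · intro j
    have := (hmemT _).1 (hidxmem j)
    rw [integral_stepFun_node htt0 httm b]
    exact this
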